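/- arXiv:math/0410545 — 3 statements merged into one kernel-verified Lean document; each statement's English description precedes it below -/
import Mathlib

section
/- Let P be a lazy, irreducible, aperiodic Markov chain on a finite state space K with stationary distribution π, and let A ⊆ K with 0 < π(A) ≤ 1/2. Then ψ_big(A) + ψ⁺(A) = Φ(A); consequently Φ(A)/2 ≤ ψ_big(A) ≤ Φ(A). -/
open Finset MeasureTheory

noncomputable section

attribute [local instance] Classical.propDecidable

variable {K : Type*} [Fintype K]

/-- `matPow P t u v` is the `t`-step transition probability from `u` to `v`. -/
def matPow (P : K → K → ℝ) : ℕ → K → K → ℝ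
  | 0 => fun u v => if u = v then 1 else 0
  | (t + 1) => fun u v => ∑ w, matPow P t u w * P w v

/-- `P` is a stochastic matrix with (strictly positive) stationary distribution `π`. -/
structure IsMarkov (P : K → K → ℝ) (π : K → ℝ) : Prop where
  nonneg : ∀ u v, 0 ≤ P u v
  rowSum : ∀ u, ∑ v, P u v = 1
  piPos : ∀ v, 0 < π v
  piSum : ∑ v, π v = 1
  stationary : ∀ v, ∑ u, π u * P u v = π v

/-- `P` is lazy: every holding probability is at least `1/2`. -/
def IsLazy (P : K → K → ℝ) : Prop := ∀ u, (1 : ℝ) / 2 ≤ P u u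

/-- irreducibility: every state can reach every other state. -/
def MCIrreducible (P : K → K → ℝ) : Prop := ∀ u v : K, ∃ t : ℕ, 0 < matPow P t u v

/-- aperiodicity: the gcd of the return times of every state is `1`. -/
def MCAperiodic (P : K → K → ℝ) : Prop :=
  ∀ u : K, ∀ d : ℕ, (∀ t : ℕ, 0 < matPow P t u u → d ∣ t) → d ≤ 1

/-- reversibility: the detailed balance condition. -/
def IsReversible (P : K → K → ℝ) (π : K → ℝ) : Prop :=
  ∀ u v, π u * P u v = π v * P v u

/-- `π`-measure of a set. -/
def meas (π : K → ℝ) (A : Finset K) : ℝ := ∑ v ∈ A, π v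

/-- the time reversal `P̄(u,v) = π(v) P(v,u) / π(u)`. -/
def rev (P : K → K → ℝ) (π : K → ℝ) (u v : K) : ℝ := π v * P v u / π u

/-- transition probability from a point into a set, w.r.t. kernel `R`. -/
def setProb (R : K → K → ℝ) (v : K) (C : Finset K) : ℝ := ∑ c ∈ C, R v c

/-- the level set `A_u = {y : R(y,A) > u}`, w.r.t. kernel `R`. -/
def levelSet (R : K → K → ℝ) (A : Finset K) (u : ℝ) : Finset K :=
  Finset.univ.filter (fun y => u < setProb R y A)

/-- `g` is a fractional subset of `S` of measure `t`. -/
def IsFracSub (π : K → ℝ) (S : Finset K) (g : K → ℝ) (t : ℝ) : Prop :=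
  (∀ v, 0 ≤ g v ∧ g v ≤ 1) ∧ (∀ v ∉ S, g v = 0) ∧ ∑ v, g v * π v = t

/-- ergodic flow from a fractional subset `g` into `C`, w.r.t. kernel `R`. -/
def fracFlow (R : K → K → ℝ) (π : K → ℝ) (g : K → ℝ) (C : Finset K) : ℝ :=
  ∑ v, g v * π v * setProb R v C

/-- `Ψ(t, Aᶜ)` w.r.t. kernel `R`: for `t ≤ π(A)` the minimal flow into `Aᶜ` from a
fractional subset of `A` of measure `t`; for `t > π(A)` the minimal flow into `A`
from a fractional subset of `Aᶜ` of measure `1 − t`. -/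
def Psi (R : K → K → ℝ) (π : K → ℝ) (A : Finset K) (t : ℝ) : ℝ :=
  if t ≤ meas π A then
    sInf {q : ℝ | ∃ g : K → ℝ, IsFracSub π A g t ∧ q = fracFlow R π g Aᶜ}
  else
    sInf {q : ℝ | ∃ g : K → ℝ, IsFracSub π Aᶜ g (1 - t) ∧ q = fracFlow R π g A}

/-- `Ψ_big(t, Aᶜ)` w.r.t. kernel `R`: maximal flow into `Aᶜ` from a fractional
subset of `A` of measure `t`. -/
def PsiSup (R : K → K → ℝ) (π : K → ℝ) (A : Finset K) (t : ℝ) : ℝ :=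
  sSup {q : ℝ | ∃ g : K → ℝ, IsFracSub π A g t ∧ q = fracFlow R π g Aᶜ}

/-- the spread `ψ⁺(A)` (w.r.t. kernel `R`). -/
def psiPlus (R : K → K → ℝ) (π : K → ℝ) (A : Finset K) : ℝ :=
  (∫ t in (0:ℝ)..(meas π A), Psi R π A t) / (meas π A) ^ 2

/-- the quantity `ψ⁻(A)` (w.r.t. kernel `R`). -/
def psiMinus (R : K → K → ℝ) (π : K → ℝ) (A : Finset K) : ℝ :=
  (∫ t in (meas π A)..(1:ℝ), Psi R π A t) / (meas π A) ^ 2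

/-- the modified spread `ψ_mod(A)` (w.r.t. kernel `R`). -/
def psiMod (R : K → K → ℝ) (π : K → ℝ) (A : Finset K) : ℝ :=
  (∫ t in (0:ℝ)..(1:ℝ), Psi R π A t / min t (1 - t)) / meas π A

/-- the global spread `ψ_gl(A)` (w.r.t. kernel `R`). -/
def psiGl (R : K → K → ℝ) (π : K → ℝ) (A : Finset K) : ℝ :=
  (∫ t in (0:ℝ)..(1:ℝ), Psi R π A t) / (meas π A) ^ 2

/-- the quantity `ψ_big(A)` (w.r.t. kernel `R`). -/
def psiBig (R : K → K → ℝ) (π : K → ℝ) (A : Finset K) : ℝ :=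
  (∫ t in (0:ℝ)..(meas π A), PsiSup R π A t) / (meas π A) ^ 2

/-- the evolving-set quantity `ψ_evo(A)`, with level sets taken w.r.t. kernel `R`. -/
def psiEvo (R : K → K → ℝ) (π : K → ℝ) (A : Finset K) : ℝ :=
  1 - ∫ u in (0:ℝ)..(1:ℝ), Real.sqrt (meas π (levelSet R A u) / meas π A)

/-- ergodic flow `Q(B,C)`. -/
def ergFlow (P : K → K → ℝ) (π : K → ℝ) (B C : Finset K) : ℝ :=
  ∑ u ∈ B, ∑ v ∈ C, π u * P u v

/-- conductance `Φ(A)`. -/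
def conductance (P : K → K → ℝ) (π : K → ℝ) (A : Finset K) : ℝ :=
  ergFlow P π A Aᶜ / meas π A

def Qone (P : K → K → ℝ) (π : K → ℝ) (C D : Finset K) : ℝ :=
  ∑ v ∈ C, setProb P v D * π v

def Qtwo (P : K → K → ℝ) (π : K → ℝ) (C D : Finset K) : ℝ :=
  ∑ v ∈ C, Real.sqrt (setProb P v D) * π v

def Qinfty (P : K → K → ℝ) (π : K → ℝ) (C D : Finset K) : ℝ :=
  meas π (C.filter (fun v => 0 < setProb P v D))

/-- discrete gradient `h₁⁺(A)`. -/
def hOneP (P : K → K → ℝ) (π : K → ℝ) (A : Finset K) : ℝ :=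
  Qone P π A Aᶜ / min (meas π A) (meas π Aᶜ)

/-- discrete gradient `h₁⁻(A)`. -/
def hOneM (P : K → K → ℝ) (π : K → ℝ) (A : Finset K) : ℝ :=
  Qone P π Aᶜ A / min (meas π A) (meas π Aᶜ)

/-- discrete gradient `h₂⁺(A)`. -/
def hTwoP (P : K → K → ℝ) (π : K → ℝ) (A : Finset K) : ℝ :=
  Qtwo P π A Aᶜ / min (meas π A) (meas π Aᶜ)

/-- discrete gradient `h₂⁻(A)`. -/
def hTwoM (P : K → K → ℝ) (π : K → ℝ) (A : Finset K) : ℝ :=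
  Qtwo P π Aᶜ A / min (meas π A) (meas π Aᶜ)

/-- discrete gradient `h_∞⁺(A)`. -/
def hInfP (P : K → K → ℝ) (π : K → ℝ) (A : Finset K) : ℝ :=
  Qinfty P π A Aᶜ / min (meas π A) (meas π Aᶜ)

/-- discrete gradient `h_∞⁻(A)`. -/
def hInfM (P : K → K → ℝ) (π : K → ℝ) (A : Finset K) : ℝ :=
  Qinfty P π Aᶜ A / min (meas π A) (meas π Aᶜ)

/-- `p` is a probability distribution. -/
def IsDist (p : K → ℝ) : Prop := (∀ v, 0 ≤ p v) ∧ ∑ v, p v = 1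

/-- the distribution after `t` steps starting from `p`. -/
def stepDist (P : K → K → ℝ) (p : K → ℝ) (t : ℕ) (v : K) : ℝ :=
  ∑ u, p u * matPow P t u v

/-- total variation distance. -/
def tvDist (μ π : K → ℝ) : ℝ := (1 / 2) * ∑ v, |μ v - π v|

/-- chi-square distance. -/
def chi2Dist (μ π : K → ℝ) : ℝ := ∑ v, (μ v / π v - 1) ^ 2 * π v

/-- total variation mixing time `τ(ε)`: the max over initial distributions of the
least time at which total variation distance drops to `ε`. -/
def mixTV (P : K → K → ℝ) (π : K → ℝ) (ε : ℝ) : ℕ :=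
  sSup {n : ℕ | ∃ p : K → ℝ, IsDist p ∧
    n = sInf {t : ℕ | tvDist (stepDist P p t) π ≤ ε}}

/-- chi-square mixing time `χ²(ε)`. -/
def mixChi2 (P : K → K → ℝ) (π : K → ℝ) (ε : ℝ) : ℕ :=
  sSup {n : ℕ | ∃ p : K → ℝ, IsDist p ∧
    n = sInf {t : ℕ | chi2Dist (stepDist P p t) π ≤ ε}}

/-- `π₀ = min_v π(v)`. -/
def piMin (π : K → ℝ) : ℝ := sInf {r : ℝ | ∃ v : K, r = π v}

/-- `ψ⁺(x)`: worst spread over sets of measure at most `x`. -/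
def psiPlusSize (R : K → K → ℝ) (π : K → ℝ) (x : ℝ) : ℝ :=
  sInf {r : ℝ | ∃ A : Finset K, 0 < meas π A ∧ meas π A ≤ x ∧ r = psiPlus R π A}

/-- `ψ_evo(x)`: worst evolving-set quantity over sets of measure at most `x`. -/
def psiEvoSize (R : K → K → ℝ) (π : K → ℝ) (x : ℝ) : ℝ :=
  sInf {r : ℝ | ∃ A : Finset K, 0 < meas π A ∧ meas π A ≤ x ∧ r = psiEvo R π A}

/-- `ψ_big(x)`: worst `ψ_big` over sets of measure at most `x`. -/
def psiBigSize (R : K → K → ℝ) (π : K → ℝ) (x : ℝ) : ℝ :=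
  sInf {r : ℝ | ∃ A : Finset K, 0 < meas π A ∧ meas π A ≤ x ∧ r = psiBig R π A}

/-- Dirichlet form. -/
def dirichletForm (P : K → K → ℝ) (π : K → ℝ) (f : K → ℝ) : ℝ :=
  (1 / 2) * ∑ u, ∑ v, π u * P u v * (f u - f v) ^ 2

/-- variance w.r.t. `π`. -/
def varPi (π : K → ℝ) (f : K → ℝ) : ℝ :=
  ∑ v, π v * f v ^ 2 - (∑ v, π v * f v) ^ 2

/-- the spectral gap `λ`. -/
def specGap (P : K → K → ℝ) (π : K → ℝ) : ℝ :=
  sInf {r : ℝ | ∃ f : K → ℝ, (∃ u v, f u ≠ f v) ∧ r = dirichletForm P π f / varPi π f}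

/-- `P_* = 1 − min_{u ∈ A} P(u, A)`. -/
def Pstar (P : K → K → ℝ) (A : Finset K) : ℝ :=
  1 - sInf {r : ℝ | ∃ u ∈ A, r = setProb P u A}

/-- `P_min = min {P(u,v)/π(v) : u ∈ A, v ∈ Aᶜ, P(u,v) > 0}`. -/
def PminEdge (P : K → K → ℝ) (π : K → ℝ) (A : Finset K) : ℝ :=
  sInf {r : ℝ | ∃ u ∈ A, ∃ v ∈ Aᶜ, 0 < P u v ∧ r = P u v / π v}

/-- `w(t) = inf {y ∈ [0,1] : π(A_y) ≤ t}`. -/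
def wfun (R : K → K → ℝ) (π : K → ℝ) (A : Finset K) (t : ℝ) : ℝ :=
  sInf {y : ℝ | y ∈ Set.Icc (0:ℝ) 1 ∧ meas π (levelSet R A y) ≤ t}

namespace PsiBigAux

variable {K : Type*} [Fintype K]

/-- the set of achievable flows from fractional subsets of `A` of measure `t`. -/
def Sset (P : K → K → ℝ) (π : K → ℝ) (A : Finset K) (t : ℝ) : Set ℝ :=
  {q : ℝ | ∃ g : K → ℝ, IsFracSub π A g t ∧ q = fracFlow P π g Aᶜ}

lemma setProb_nonneg {P : K → K → ℝ} (hP : ∀ u v, 0 ≤ P u v) (v : K) (C : Finset K) :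
    0 ≤ setProb P v C := Finset.sum_nonneg fun c _ => hP v c

lemma ergFlow_eq (P : K → K → ℝ) (π : K → ℝ) (A C : Finset K) :
    ergFlow P π A C = ∑ v ∈ A, π v * setProb P v C :=
  Finset.sum_congr rfl fun u _ => (Finset.mul_sum _ _ _).symm

lemma fracFlow_eq_sum (P : K → K → ℝ) (π : K → ℝ) {A : Finset K} {g : K → ℝ} {t : ℝ}
    (hg : IsFracSub π A g t) (C : Finset K) :
    fracFlow P π g C = ∑ v ∈ A, g v * π v * setProb P v C := by
  refine (Finset.sum_subset (Finset.subset_univ A) fun v _ hv => ?_).symm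
  rw [hg.2.1 v hv, zero_mul, zero_mul]

lemma fracFlow_nonneg {P : K → K → ℝ} {π : K → ℝ} (hM : IsMarkov P π)
    {A : Finset K} {g : K → ℝ} {t : ℝ} (hg : IsFracSub π A g t) (C : Finset K) :
    0 ≤ fracFlow P π g C :=
  Finset.sum_nonneg fun v _ => mul_nonneg (mul_nonneg (hg.1 v).1 (hM.piPos v).le)
    (setProb_nonneg hM.nonneg v C)

lemma fracFlow_le {P : K → K → ℝ} {π : K → ℝ} (hM : IsMarkov P π)
    {A : Finset K} {g : K → ℝ} {t : ℝ} (hg : IsFracSub π A g t) :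
    fracFlow P π g Aᶜ ≤ ergFlow P π A Aᶜ := by
  rw [fracFlow_eq_sum P π hg, ergFlow_eq]
  refine Finset.sum_le_sum fun v _ => ?_
  rw [mul_assoc]
  exact mul_le_of_le_one_left (mul_nonneg (hM.piPos v).le (setProb_nonneg hM.nonneg v Aᶜ))
    (hg.1 v).2

lemma Sset_nonempty {P : K → K → ℝ} {π : K → ℝ} (hM : IsMarkov P π)
    {A : Finset K} (hA0 : 0 < meas π A) {t : ℝ} (h0 : 0 ≤ t) (ht : t ≤ meas π A) :
    (Sset P π A t).Nonempty := by
  refine ⟨_, fun v => if v ∈ A then t / meas π A else 0, ⟨fun v => ?_, fun v hv => ?_, ?_⟩, rfl⟩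
  · by_cases hv : v ∈ A <;> simp only [hv, if_true, if_false]
    · exact ⟨div_nonneg h0 hA0.le, (div_le_one hA0).2 ht⟩
    · exact ⟨le_refl 0, zero_le_one⟩
  · simp [hv]
  · simp only [ite_mul, zero_mul, Finset.sum_ite_mem, Finset.univ_inter]
    rw [← Finset.mul_sum]
    exact div_mul_cancel₀ t (ne_of_gt hA0)

lemma Sset_bddBelow {P : K → K → ℝ} {π : K → ℝ} (hM : IsMarkov P π)
    (A : Finset K) (t : ℝ) : BddBelow (Sset P π A t) :=
  ⟨0, fun q ⟨g, hg, hq⟩ => hq ▸ fracFlow_nonneg hM hg Aᶜ⟩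

lemma Sset_bddAbove {P : K → K → ℝ} {π : K → ℝ} (hM : IsMarkov P π)
    (A : Finset K) (t : ℝ) : BddAbove (Sset P π A t) :=
  ⟨ergFlow P π A Aᶜ, fun q ⟨g, hg, hq⟩ => hq ▸ fracFlow_le hM hg⟩

lemma Psi_eq (P : K → K → ℝ) (π : K → ℝ) (A : Finset K) {t : ℝ} (ht : t ≤ meas π A) :
    Psi P π A t = sInf (Sset P π A t) := by
  rw [Psi, if_pos ht]; rfl

lemma frac_compl {P : K → K → ℝ} {π : K → ℝ} (hM : IsMarkov P π)
    {A : Finset K} {g : K → ℝ} {t : ℝ} (hg : IsFracSub π A g t) :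
    IsFracSub π A (fun v => (if v ∈ A then 1 else 0) - g v) (meas π A - t) ∧
    fracFlow P π (fun v => (if v ∈ A then 1 else 0) - g v) Aᶜ
      = ergFlow P π A Aᶜ - fracFlow P π g Aᶜ := by
  refine ⟨⟨fun v => ?_, fun v hv => ?_, ?_⟩, ?_⟩
  · by_cases hv : v ∈ A <;> simp only [hv, if_true, if_false]
    · constructor <;> [linarith [(hg.1 v).2]; linarith [(hg.1 v).1]]
    · rw [hg.2.1 v hv]; norm_num
  · simp [hv, hg.2.1 v hv]
  · simp only [sub_mul, Finset.sum_sub_distrib, hg.2.2, ite_mul, one_mul, zero_mul,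
      Finset.sum_ite_mem, Finset.univ_inter]
    rfl
  · unfold fracFlow
    have : ∀ v : K, ((if v ∈ A then (1:ℝ) else 0) - g v) * π v * setProb P v Aᶜ
        = (if v ∈ A then π v * setProb P v Aᶜ else 0) - g v * π v * setProb P v Aᶜ := by
      intro v; by_cases hv : v ∈ A <;> simp [hv] <;> ring
    rw [Finset.sum_congr rfl fun v _ => this v, Finset.sum_sub_distrib,
      Finset.sum_ite_mem, Finset.univ_inter, ergFlow_eq]

lemma PsiSup_dual {P : K → K → ℝ} {π : K → ℝ} (hM : IsMarkov P π)
    {A : Finset K} (hA0 : 0 < meas π A) {t : ℝ} (h0 : 0 ≤ t) (ht : t ≤ meas π A) :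
    PsiSup P π A t = ergFlow P π A Aᶜ - Psi P π A (meas π A - t) := by
  have hne : (Sset P π A t).Nonempty := Sset_nonempty hM hA0 h0 ht
  have hne' : (Sset P π A (meas π A - t)).Nonempty :=
    Sset_nonempty hM hA0 (by linarith) (by linarith)
  rw [Psi_eq P π A (by linarith)]
  have hSup : PsiSup P π A t = sSup (Sset P π A t) := rfl
  rw [hSup]
  apply le_antisymm
  · refine csSup_le hne fun q hq => ?_
    obtain ⟨g, hg, rfl⟩ := hq
    have hmem : ergFlow P π A Aᶜ - fracFlow P π g Aᶜ ∈ Sset P π A (meas π A - t) :=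
      ⟨_, (frac_compl hM hg).1, ((frac_compl hM hg).2).symm⟩
    have := csInf_le (Sset_bddBelow hM A _) hmem
    linarith
  · rw [sub_le_iff_le_add, ← sub_le_iff_le_add']
    refine le_csInf hne' fun q hq => ?_
    obtain ⟨g, hg, rfl⟩ := hq
    have hg' := frac_compl hM hg
    rw [show meas π A - (meas π A - t) = t by ring] at hg'
    have hmem : ergFlow P π A Aᶜ - fracFlow P π g Aᶜ ∈ Sset P π A t :=
      ⟨_, hg'.1, (hg'.2).symm⟩
    have := le_csSup (Sset_bddAbove hM A t) hmem
    linarith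

lemma Psi_nonneg {P : K → K → ℝ} {π : K → ℝ} (hM : IsMarkov P π)
    (A : Finset K) {t : ℝ} (ht : t ≤ meas π A) : 0 ≤ Psi P π A t := by
  rw [Psi_eq P π A ht]
  exact Real.sInf_nonneg fun q ⟨g, hg, hq⟩ => hq ▸ fracFlow_nonneg hM hg Aᶜ

lemma Psi_monoOn {P : K → K → ℝ} {π : K → ℝ} (hM : IsMarkov P π)
    {A : Finset K} (hA0 : 0 < meas π A) :
    MonotoneOn (Psi P π A) (Set.Icc 0 (meas π A)) := by
  rintro s ⟨hs0, hsA⟩ t ⟨ht0, htA⟩ hst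
  rcases eq_or_lt_of_le hst with rfl | hlt
  · exact le_refl _
  have htpos : 0 < t := lt_of_le_of_lt hs0 hlt
  rw [Psi_eq P π A hsA, Psi_eq P π A htA]
  refine le_csInf (Sset_nonempty hM hA0 ht0 htA) fun q hq => ?_
  obtain ⟨g, hg, rfl⟩ := hq
  have hc0 : 0 ≤ s / t := div_nonneg hs0 htpos.le
  have hc1 : s / t ≤ 1 := (div_le_one htpos).2 hst
  have hmem : (s / t) * fracFlow P π g Aᶜ ∈ Sset P π A s := by
    refine ⟨fun v => (s / t) * g v, ⟨fun v => ⟨mul_nonneg hc0 (hg.1 v).1,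
      mul_le_one₀ hc1 (hg.1 v).1 (hg.1 v).2⟩, fun v hv => by simp [hg.2.1 v hv], ?_⟩, ?_⟩
    · simp only [mul_assoc, ← Finset.mul_sum, hg.2.2]
      exact div_mul_cancel₀ s (ne_of_gt htpos)
    · unfold fracFlow
      rw [Finset.mul_sum]
      exact Finset.sum_congr rfl fun v _ => by ring
  calc sInf (Sset P π A s) ≤ (s / t) * fracFlow P π g Aᶜ := csInf_le (Sset_bddBelow hM A s) hmem
    _ ≤ fracFlow P π g Aᶜ := mul_le_of_le_one_left (fracFlow_nonneg hM hg Aᶜ) hc1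

end PsiBigAux

/-- `ψ_big(A) + ψ⁺(A) = Φ(A)`, hence `Φ(A)/2 ≤ ψ_big(A) ≤ Φ(A)`. -/
theorem psiBig_add_psiPlus_eq_conductance
    (P : K → K → ℝ) (π : K → ℝ) (A : Finset K)
    (hM : IsMarkov P π) (hlazy : IsLazy P)
    (hirr : MCIrreducible P) (hap : MCAperiodic P)
    (hA0 : 0 < meas π A) (hA : meas π A ≤ 1 / 2) :
    psiBig P π A + psiPlus P π A = conductance P π A ∧
    conductance P π A / 2 ≤ psiBig P π A ∧
    psiBig P π A ≤ conductance P π A := by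
  classical
  open PsiBigAux in
  set a := meas π A with ha
  set Q := ergFlow P π A Aᶜ with hQdef
  have hane : a ≠ 0 := ne_of_gt hA0
  have hmono : MonotoneOn (Psi P π A) (Set.uIcc 0 a) := by
    rw [Set.uIcc_of_le hA0.le]; exact Psi_monoOn hM hA0
  have int1 : IntervalIntegrable (Psi P π A) MeasureTheory.volume 0 a :=
    hmono.intervalIntegrable
  have hanti : AntitoneOn (fun t => Psi P π A (a - t)) (Set.uIcc 0 a) := by
    rw [Set.uIcc_of_le hA0.le]
    intro s hs t ht hst
    exact Psi_monoOn hM hA0 ⟨by linarith [ht.2], by linarith [ht.1]⟩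
      ⟨by linarith [hs.2], by linarith [hs.1]⟩ (by linarith)
  have int2 : IntervalIntegrable (fun t => Psi P π A (a - t)) MeasureTheory.volume 0 a :=
    hanti.intervalIntegrable
  set I := ∫ t in (0:ℝ)..a, Psi P π A t with hI
  have hrev : (∫ t in (0:ℝ)..a, Psi P π A (a - t)) = I := by
    rw [intervalIntegral.integral_comp_sub_left (Psi P π A) a]
    simp [hI]
  have hSupEq : (∫ t in (0:ℝ)..a, PsiSup P π A t) = Q * a - I := by
    have hcongr : Set.EqOn (PsiSup P π A) (fun t => Q - Psi P π A (a - t))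
        (Set.uIcc (0:ℝ) a) := by
      intro t ht
      rw [Set.uIcc_of_le hA0.le] at ht
      exact PsiSup_dual hM hA0 ht.1 ht.2
    rw [intervalIntegral.integral_congr hcongr,
      intervalIntegral.integral_sub (intervalIntegrable_const) int2,
      intervalIntegral.integral_const, hrev]
    simp [mul_comm]
  have hI0 : 0 ≤ I :=
    intervalIntegral.integral_nonneg hA0.le fun t ht => Psi_nonneg hM A (by linarith [ht.2])
  have hI2 : 2 * I ≤ Q * a := by
    have hpt : ∀ t ∈ Set.Icc (0:ℝ) a, Psi P π A t + Psi P π A (a - t) ≤ Q := by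
      intro t ht
      have h1 : Psi P π A t ≤ PsiSup P π A t := by
        rw [Psi_eq P π A ht.2]
        exact csInf_le_csSup (Sset_nonempty hM hA0 ht.1 ht.2) (Sset_bddBelow hM A t)
          (Sset_bddAbove hM A t)
      have h2 := PsiSup_dual hM hA0 ht.1 ht.2
      rw [h2] at h1
      linarith
    have := intervalIntegral.integral_mono_on hA0.le (int1.add int2)
      intervalIntegrable_const hpt
    rw [intervalIntegral.integral_add int1 int2, hrev, intervalIntegral.integral_const] at this
    simp only [sub_zero, smul_eq_mul] at this
    linarith [this]
  have hBig : psiBig P π A = (Q * a - I) / a ^ 2 := by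
    rw [psiBig, hSupEq]
  have hPlus : psiPlus P π A = I / a ^ 2 := rfl
  have hCond : conductance P π A = Q / a := rfl
  have heq : psiBig P π A + psiPlus P π A = conductance P π A := by
    rw [hBig, hPlus, hCond]
    field_simp
    ring
  refine ⟨heq, ?_, ?_⟩
  · rw [hCond, hBig, div_div, div_le_div_iff₀ (by positivity) (by positivity)]
    nlinarith [mul_nonneg hA0.le (sub_nonneg.2 hI2)]
  · rw [hCond, hBig, div_le_div_iff₀ (by positivity) (by positivity)]
    nlinarith [mul_nonneg hA0.le hI0]
end
end

section
/- Let P be a lazy, irreducible, aperiodic, reversible Markov chain on a finite state space K with stationary distribution π. Then the spectral gap satisfies λ ≤ 4·ψ_big(1/2). -/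
open Finset MeasureTheory

noncomputable section

attribute [local instance] Classical.propDecidable

variable {K : Type*} [Fintype K]

lemma setProb_nonneg {P : K → K → ℝ} (h : ∀ u v, 0 ≤ P u v) (v : K) (C : Finset K) :
    0 ≤ setProb P v C := Finset.sum_nonneg fun _ _ => h _ _

lemma setProb_le_one {P : K → K → ℝ} (h0 : ∀ u v, 0 ≤ P u v) (h1 : ∀ u, ∑ w, P u w = 1)
    (v : K) (C : Finset K) : setProb P v C ≤ 1 := by
  rw [← h1 v]
  exact Finset.sum_le_sum_of_subset_of_nonneg (Finset.subset_univ _) fun i _ _ => h0 _ _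

lemma flowSet_bddAbove (P : K → K → ℝ) (π : K → ℝ) (hM : IsMarkov P π) (A : Finset K) (t : ℝ) :
    BddAbove {q : ℝ | ∃ g, IsFracSub π A g t ∧ q = fracFlow P π g Aᶜ} := by
  refine ⟨1, ?_⟩
  rintro q ⟨g, hg, rfl⟩
  calc fracFlow P π g Aᶜ ≤ ∑ v, π v := by
        apply Finset.sum_le_sum; intro v _
        have h1 := (hg.1 v).1; have h2 := (hg.1 v).2
        have h3 := setProb_le_one hM.nonneg hM.rowSum v Aᶜ
        have h4 := setProb_nonneg hM.nonneg v Aᶜ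
        have h5 := (hM.piPos v).le
        calc g v * π v * setProb P v Aᶜ ≤ g v * π v * 1 :=
              mul_le_mul_of_nonneg_left h3 (mul_nonneg h1 h5)
          _ = g v * π v := mul_one _
          _ ≤ 1 * π v := mul_le_mul_of_nonneg_right h2 h5
          _ = π v := one_mul _
    _ = 1 := hM.piSum

lemma sum_ind_mul (A : Finset K) (f : K → ℝ) :
    ∑ v, (if v ∈ A then (1:ℝ) else 0) * f v = ∑ v ∈ A, f v := by
  have : ∀ v, (if v ∈ A then (1:ℝ) else 0) * f v = (if v ∈ A then f v else 0) := by
    intro v; split_ifs <;> simp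
  simp_rw [this, Finset.sum_ite_mem, Finset.univ_inter]

lemma scaled_indicator_mem (P : K → K → ℝ) (π : K → ℝ) (hM : IsMarkov P π)
    (A : Finset K) (ha : 0 < meas π A) {t : ℝ} (ht0 : 0 ≤ t) (hta : t ≤ meas π A) :
    (t / meas π A) * ergFlow P π A Aᶜ ∈
      {q : ℝ | ∃ g, IsFracSub π A g t ∧ q = fracFlow P π g Aᶜ} := by
  have hr0 : 0 ≤ t / meas π A := div_nonneg ht0 ha.le
  have hr1 : t / meas π A ≤ 1 := (div_le_one ha).2 hta
  refine ⟨fun v => (t / meas π A) * (if v ∈ A then 1 else 0), ⟨?_, ?_, ?_⟩, ?_⟩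
  · intro v; by_cases h : v ∈ A <;> simp [h, hr0, hr1]
  · intro v hv; simp [hv]
  · have : ∑ v, (t / meas π A) * (if v ∈ A then (1:ℝ) else 0) * π v
        = (t / meas π A) * ∑ v, (if v ∈ A then (1:ℝ) else 0) * π v := by
      rw [Finset.mul_sum]; apply Finset.sum_congr rfl; intros; ring
    rw [this, sum_ind_mul]
    show (t / meas π A) * meas π A = t
    field_simp
  · show _ = ∑ v, (t / meas π A) * (if v ∈ A then (1:ℝ) else 0) * π v * setProb P v Aᶜ
    have : ∑ v, (t / meas π A) * (if v ∈ A then (1:ℝ) else 0) * π v * setProb P v Aᶜ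
        = (t / meas π A) * ∑ v, (if v ∈ A then (1:ℝ) else 0) * (π v * setProb P v Aᶜ) := by
      rw [Finset.mul_sum]; apply Finset.sum_congr rfl; intros; ring
    rw [this, sum_ind_mul]
    congr 1
    unfold ergFlow setProb
    apply Finset.sum_congr rfl
    intros; rw [Finset.mul_sum]

lemma flowSet_nonempty (P : K → K → ℝ) (π : K → ℝ) (hM : IsMarkov P π)
    (A : Finset K) (ha : 0 < meas π A) {t : ℝ} (ht0 : 0 ≤ t) (hta : t ≤ meas π A) :
    {q : ℝ | ∃ g, IsFracSub π A g t ∧ q = fracFlow P π g Aᶜ}.Nonempty :=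
  ⟨_, scaled_indicator_mem P π hM A ha ht0 hta⟩

lemma psiSup_ge (P : K → K → ℝ) (π : K → ℝ) (hM : IsMarkov P π)
    (A : Finset K) (ha : 0 < meas π A) {t : ℝ} (ht0 : 0 ≤ t) (hta : t ≤ meas π A) :
    (t / meas π A) * ergFlow P π A Aᶜ ≤ PsiSup P π A t :=
  le_csSup (flowSet_bddAbove P π hM A t) (scaled_indicator_mem P π hM A ha ht0 hta)

lemma psiSup_monoOn (P : K → K → ℝ) (π : K → ℝ) (hM : IsMarkov P π)
    (A : Finset K) (ha : 0 < meas π A) :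
    MonotoneOn (PsiSup P π A) (Set.Icc 0 (meas π A)) := by
  rintro t ⟨ht0, hta⟩ t' ⟨ht0', hta'⟩ htt'
  apply csSup_le (flowSet_nonempty P π hM A ha ht0 hta)
  rintro q ⟨g, hg, rfl⟩
  rcases eq_or_lt_of_le hta with heq | hlt
  · have : t = t' := le_antisymm htt' (heq ▸ hta')
    subst this
    exact le_csSup (flowSet_bddAbove P π hM A t) ⟨g, hg, rfl⟩
  · set s : ℝ := (t' - t) / (meas π A - t) with hs
    have hd : 0 < meas π A - t := by linarith
    have hs0 : 0 ≤ s := div_nonneg (by linarith) hd.le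
    have hs1 : s ≤ 1 := (div_le_one hd).2 (by linarith)
    set g' : K → ℝ := fun v => g v + s * ((if v ∈ A then 1 else 0) - g v) with hg'
    have hgle : ∀ v, g v ≤ g' v := by
      intro v
      have h1 := (hg.1 v).1
      have h2 := (hg.1 v).2
      by_cases h : v ∈ A
      · simp only [hg', h, if_pos]
        nlinarith
      · have := hg.2.1 v h
        simp [hg', h, this]
    have hfs : IsFracSub π A g' t' := by
      refine ⟨?_, ?_, ?_⟩
      · intro v
        have h1 := (hg.1 v).1
        have h2 := (hg.1 v).2
        constructor
        · exact le_trans h1 (hgle v)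
        · by_cases h : v ∈ A <;> simp only [hg', h, if_pos, if_neg, not_false_iff] <;> nlinarith
      · intro v hv
        simp [hg', hg.2.1 v hv, hv]
      · have expand : ∑ v, g' v * π v
            = ∑ v, g v * π v + s * ((∑ v, (if v ∈ A then (1:ℝ) else 0) * π v) - ∑ v, g v * π v) := by
          rw [← Finset.sum_sub_distrib, Finset.mul_sum, ← Finset.sum_add_distrib]
          apply Finset.sum_congr rfl; intros; simp only [hg']; ring
        rw [expand, sum_ind_mul, hg.2.2]
        show t + (t' - t) / (meas π A - t) * (meas π A - t) = t'
        field_simp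
        ring
      
    have hflow : fracFlow P π g Aᶜ ≤ fracFlow P π g' Aᶜ := by
      apply Finset.sum_le_sum
      intro v _
      have := mul_nonneg (hM.piPos v).le (setProb_nonneg hM.nonneg v Aᶜ)
      have h := hgle v
      calc g v * π v * setProb P v Aᶜ = g v * (π v * setProb P v Aᶜ) := by ring
        _ ≤ g' v * (π v * setProb P v Aᶜ) := mul_le_mul_of_nonneg_right h this
        _ = g' v * π v * setProb P v Aᶜ := by ring
    exact le_trans hflow (le_csSup (flowSet_bddAbove P π hM A t') ⟨g', hfs, rfl⟩)

lemma integral_psiSup_ge (P : K → K → ℝ) (π : K → ℝ) (hM : IsMarkov P π)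
    (A : Finset K) (ha : 0 < meas π A) :
    ergFlow P π A Aᶜ * meas π A / 2 ≤ ∫ t in (0:ℝ)..(meas π A), PsiSup P π A t := by
  set a := meas π A
  have hmono : MonotoneOn (PsiSup P π A) (Set.uIcc 0 a) := by
    rw [Set.uIcc_of_le ha.le]; exact psiSup_monoOn P π hM A ha
  have hint : IntervalIntegrable (PsiSup P π A) volume 0 a := hmono.intervalIntegrable
  have hlin : IntervalIntegrable (fun t => (t / a) * ergFlow P π A Aᶜ) volume 0 a := by
    apply Continuous.intervalIntegrable
    continuity
  have hcomp : (∫ t in (0:ℝ)..a, (t / a) * ergFlow P π A Aᶜ)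
      ≤ ∫ t in (0:ℝ)..a, PsiSup P π A t := by
    apply intervalIntegral.integral_mono_on ha.le hlin hint
    intro t ht
    exact psiSup_ge P π hM A ha ht.1 ht.2
  refine le_trans (le_of_eq ?_) hcomp
  have : (∫ t in (0:ℝ)..a, (t / a) * ergFlow P π A Aᶜ)
      = (∫ t in (0:ℝ)..a, t) * (ergFlow P π A Aᶜ / a) := by
    rw [← intervalIntegral.integral_mul_const]
    apply intervalIntegral.integral_congr
    intro t _; ring
  rw [this, integral_id]
  field_simp
  ring


lemma varPi_indicator (π : K → ℝ) (A : Finset K) :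
    varPi π (fun v => if v ∈ A then (1:ℝ) else 0) = meas π A - (meas π A) ^ 2 := by
  unfold varPi meas
  have h1 : ∑ v, π v * (if v ∈ A then (1:ℝ) else 0) ^ 2 = ∑ v ∈ A, π v := by
    rw [← sum_ind_mul A π]
    apply Finset.sum_congr rfl; intro v _; split_ifs <;> ring
  have h2 : ∑ v, π v * (if v ∈ A then (1:ℝ) else 0) = ∑ v ∈ A, π v := by
    rw [← sum_ind_mul A π]
    apply Finset.sum_congr rfl; intro v _; split_ifs <;> ring
  rw [h1, h2]

lemma dirichlet_indicator (P : K → K → ℝ) (π : K → ℝ) (hM : IsMarkov P π) (A : Finset K) :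
    dirichletForm P π (fun v => if v ∈ A then (1:ℝ) else 0) = ergFlow P π A Aᶜ := by
  classical
  set χ : K → ℝ := fun v => if v ∈ A then (1:ℝ) else 0 with hχ
  have hsq : ∀ v, χ v ^ 2 = χ v := by intro v; simp only [hχ]; split_ifs <;> norm_num
  have key : ∀ u v : K, (χ u - χ v) ^ 2 = χ u + χ v - 2 * (χ u * χ v) := by
    intro u v; have := hsq u; have := hsq v; ring_nf; nlinarith [hsq u, hsq v]
  have e1 : ∑ u, ∑ v, π u * P u v * (χ u - χ v) ^ 2
      = (∑ u, ∑ v, π u * P u v * χ u) + (∑ u, ∑ v, π u * P u v * χ v)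
        - 2 * ∑ u, ∑ v, π u * P u v * (χ u * χ v) := by
    rw [← Finset.sum_add_distrib, Finset.mul_sum, ← Finset.sum_sub_distrib]
    apply Finset.sum_congr rfl; intro u _
    rw [← Finset.sum_add_distrib, Finset.mul_sum, ← Finset.sum_sub_distrib]
    apply Finset.sum_congr rfl; intro v _
    rw [key u v]; ring
  have t1 : ∑ u, ∑ v, π u * P u v * χ u = meas π A := by
    have : ∀ u : K, ∑ v, π u * P u v * χ u = π u * χ u := by
      intro u
      rw [show ∑ v, π u * P u v * χ u = (π u * χ u) * ∑ v, P u v by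
        rw [Finset.mul_sum]; apply Finset.sum_congr rfl; intros; ring, hM.rowSum u, mul_one]
    unfold meas
    rw [Finset.sum_congr rfl fun u _ => this u, ← sum_ind_mul A π]
    apply Finset.sum_congr rfl; intros; ring
  have t2 : ∑ u, ∑ v, π u * P u v * χ v = meas π A := by
    rw [Finset.sum_comm]
    have : ∀ v : K, ∑ u, π u * P u v * χ v = π v * χ v := by
      intro v
      rw [show ∑ u, π u * P u v * χ v = (∑ u, π u * P u v) * χ v by
        rw [Finset.sum_mul], hM.stationary v]
    unfold meas
    rw [Finset.sum_congr rfl fun v _ => this v, ← sum_ind_mul A π]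
    apply Finset.sum_congr rfl; intros; ring
  have t3 : ∑ u, ∑ v, π u * P u v * (χ u * χ v) = ∑ u ∈ A, ∑ v ∈ A, π u * P u v := by
    rw [show ∑ u, ∑ v, π u * P u v * (χ u * χ v)
        = ∑ u, χ u * (∑ v, χ v * (π u * P u v)) by
      apply Finset.sum_congr rfl; intro u _
      rw [Finset.mul_sum]; apply Finset.sum_congr rfl; intros; ring]
    rw [sum_ind_mul A]
    apply Finset.sum_congr rfl; intro u _
    rw [sum_ind_mul A]
  have t4 : ergFlow P π A Aᶜ = meas π A - ∑ u ∈ A, ∑ v ∈ A, π u * P u v := by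
    unfold ergFlow meas
    rw [← Finset.sum_sub_distrib]
    apply Finset.sum_congr rfl; intro u hu
    have : ∑ v ∈ Aᶜ, π u * P u v + ∑ v ∈ A, π u * P u v = π u := by
      rw [Finset.sum_compl_add_sum A (fun v => π u * P u v), ← Finset.mul_sum, hM.rowSum u, mul_one]
    linarith
  unfold dirichletForm
  rw [e1, t1, t2, t3, t4]; ring

lemma varPi_nonneg (π : K → ℝ) (hM : ∀ v, (0:ℝ) ≤ π v) (hsum : ∑ v, π v = 1) (f : K → ℝ) :
    0 ≤ varPi π f := by
  unfold varPi
  have h1 : ∑ v, π v * f v = ∑ v, Real.sqrt (π v) * (Real.sqrt (π v) * f v) := by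
    apply Finset.sum_congr rfl; intro v _
    rw [← mul_assoc, Real.mul_self_sqrt (hM v)]
  have h2 : ∑ v, Real.sqrt (π v) * Real.sqrt (π v) = 1 := by
    rw [← hsum]; apply Finset.sum_congr rfl; intro v _; exact Real.mul_self_sqrt (hM v)
  have h3 : ∑ v, (Real.sqrt (π v) * f v) ^ 2 = ∑ v, π v * f v ^ 2 := by
    apply Finset.sum_congr rfl; intro v _
    have := Real.mul_self_sqrt (hM v); nlinarith [Real.sqrt_nonneg (π v)]
  have h2' : ∑ v, Real.sqrt (π v) ^ 2 = 1 := by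
    rw [← h2]; apply Finset.sum_congr rfl; intro v _; rw [sq]
  have cs := Finset.sum_mul_sq_le_sq_mul_sq Finset.univ (fun v => Real.sqrt (π v))
      (fun v => Real.sqrt (π v) * f v)
  rw [← h1, h2', h3, one_mul] at cs
  linarith

lemma dirichletForm_nonneg (P : K → K → ℝ) (π : K → ℝ) (hM : IsMarkov P π) (f : K → ℝ) :
    0 ≤ dirichletForm P π f := by
  unfold dirichletForm
  apply mul_nonneg (by norm_num)
  apply Finset.sum_nonneg; intro u _
  apply Finset.sum_nonneg; intro v _
  exact mul_nonneg (mul_nonneg (hM.piPos u).le (hM.nonneg u v)) (sq_nonneg _)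

lemma specGap_bddBelow (P : K → K → ℝ) (π : K → ℝ) (hM : IsMarkov P π) :
    BddBelow {r : ℝ | ∃ f : K → ℝ, (∃ u v, f u ≠ f v) ∧ r = dirichletForm P π f / varPi π f} := by
  refine ⟨0, ?_⟩
  rintro r ⟨f, _, rfl⟩
  exact div_nonneg (dirichletForm_nonneg P π hM f)
    (varPi_nonneg π (fun v => (hM.piPos v).le) hM.piSum f)

lemma ergFlow_nonneg (P : K → K → ℝ) (π : K → ℝ) (hM : IsMarkov P π) (A B : Finset K) :
    0 ≤ ergFlow P π A B := by
  apply Finset.sum_nonneg; intro u _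
  apply Finset.sum_nonneg; intro v _
  exact mul_nonneg (hM.piPos u).le (hM.nonneg u v)

lemma specGap_le_ratio (P : K → K → ℝ) (π : K → ℝ) (hM : IsMarkov P π)
    (A : Finset K) (ha : 0 < meas π A) (ha2 : meas π A ≤ 1 / 2) :
    specGap P π ≤ ergFlow P π A Aᶜ / (meas π A - (meas π A) ^ 2) := by
  have hAne : A.Nonempty := by
    by_contra h
    rw [Finset.not_nonempty_iff_eq_empty] at h
    rw [h] at ha; simp [meas] at ha
  have hAcne : Aᶜ.Nonempty := by
    by_contra h
    rw [Finset.not_nonempty_iff_eq_empty, Finset.compl_eq_empty_iff] at h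
    rw [h] at ha2
    have : meas π Finset.univ = 1 := hM.piSum
    rw [this] at ha2; norm_num at ha2
  obtain ⟨u, hu⟩ := hAne
  obtain ⟨v, hv⟩ := hAcne
  rw [Finset.mem_compl] at hv
  apply csInf_le (specGap_bddBelow P π hM)
  refine ⟨fun w => if w ∈ A then (1:ℝ) else 0, ⟨u, v, by simp [hu, hv]⟩, ?_⟩
  rw [dirichlet_indicator P π hM A, varPi_indicator π A]

theorem main_ineq (P : K → K → ℝ) (π : K → ℝ) (hM : IsMarkov P π)
    (A : Finset K) (ha : 0 < meas π A) (ha2 : meas π A ≤ 1 / 2) :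
    specGap P π ≤ 4 * psiBig P π A := by
  set a := meas π A with hadef
  set Q := ergFlow P π A Aᶜ with hQ
  have hQ0 : 0 ≤ Q := ergFlow_nonneg P π hM A Aᶜ
  have hI : Q * a / 2 ≤ ∫ t in (0:ℝ)..a, PsiSup P π A t := integral_psiSup_ge P π hM A ha
  have h1 : specGap P π ≤ Q / (a - a ^ 2) := specGap_le_ratio P π hM A ha ha2
  refine le_trans h1 ?_
  unfold psiBig
  rw [← hadef]
  have hden : 0 < a - a ^ 2 := by nlinarith
  have ha2pos : 0 < a ^ 2 := by positivity
  rw [div_le_iff₀ hden]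
  have key : Q * a ^ 2 ≤ 4 * (∫ t in (0:ℝ)..a, PsiSup P π A t) * (a - a ^ 2) := by
    nlinarith [mul_le_mul_of_nonneg_right hI (le_of_lt hden), mul_nonneg hQ0 (sq_nonneg a),
      mul_nonneg (mul_nonneg hQ0 ha.le) (sq_nonneg a)]
  calc Q = Q * a ^ 2 / a ^ 2 := by field_simp
    _ ≤ 4 * (∫ t in (0:ℝ)..a, PsiSup P π A t) * (a - a ^ 2) / a ^ 2 := by
        apply div_le_div_of_nonneg_right key ha2pos.le
    _ = 4 * ((∫ t in (0:ℝ)..a, PsiSup P π A t) / a ^ 2) * (a - a ^ 2) := by ring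

/-- for a lazy, irreducible, aperiodic, reversible chain,
`λ ≤ 4·ψ_big(1/2)`. -/
theorem gap_le_four_psiBig
    (P : K → K → ℝ) (π : K → ℝ)
    (hM : IsMarkov P π) (hlazy : IsLazy P)
    (hirr : MCIrreducible P) (hap : MCAperiodic P)
    (hrev : IsReversible P π) :
    specGap P π ≤ 4 * psiBigSize P π (1 / 2) := by
  rcases subsingleton_or_nontrivial K with hsub | hnt
  · have hK : Nonempty K := by
      by_contra h
      rw [not_nonempty_iff] at h
      have h1 := hM.piSum
      rw [Finset.univ_eq_empty, Finset.sum_empty] at h1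
      norm_num at h1
    obtain ⟨x⟩ := hK
    have huniv : (Finset.univ : Finset K) = {x} := by
      ext y; simp [Subsingleton.elim y x]
    have hpx : π x = 1 := by
      have h1 := hM.piSum
      rw [huniv, Finset.sum_singleton] at h1
      exact h1
    have hspec : {r : ℝ | ∃ f : K → ℝ, (∃ u v, f u ≠ f v) ∧
        r = dirichletForm P π f / varPi π f} = ∅ := by
      ext r
      simp only [Set.mem_setOf_eq, Set.mem_empty_iff_false, iff_false, not_exists]
      rintro f ⟨⟨u, v, huv⟩, -⟩
      exact huv (congrArg f (Subsingleton.elim u v))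
    have hT : {r : ℝ | ∃ A : Finset K, 0 < meas π A ∧ meas π A ≤ 1 / 2 ∧ r = psiBig P π A}
        = ∅ := by
      ext r
      simp only [Set.mem_setOf_eq, Set.mem_empty_iff_false, iff_false, not_exists]
      rintro A ⟨h1, h2, -⟩
      have hAne : A.Nonempty := by
        by_contra h
        rw [Finset.not_nonempty_iff_eq_empty] at h
        rw [h] at h1; simp [meas] at h1
      obtain ⟨u, hu⟩ := hAne
      have hx : π u ≤ meas π A :=
        Finset.single_le_sum (fun w _ => (hM.piPos w).le) hu
      have : π u = 1 := by rw [Subsingleton.elim u x]; exact hpx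
      linarith
    unfold specGap psiBigSize
    rw [hspec, hT, Real.sInf_empty]
    norm_num
  · have hpair : ∀ a b : K, a ≠ b → π a ≤ π b →
        0 < meas π ({a} : Finset K) ∧ meas π ({a} : Finset K) ≤ 1 / 2 := by
      intro a b hab hle
      have hm : meas π ({a} : Finset K) = π a := Finset.sum_singleton _ _
      constructor
      · rw [hm]; exact hM.piPos a
      · rw [hm]
        have hsub : ({a, b} : Finset K) ⊆ Finset.univ := Finset.subset_univ _
        have hsum : π a + π b ≤ ∑ w, π w := by
          rw [← Finset.sum_pair hab]
          exact Finset.sum_le_sum_of_subset_of_nonneg hsub fun w _ _ => (hM.piPos w).le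
        rw [hM.piSum] at hsum
        linarith
    obtain ⟨u, v, huv⟩ := exists_pair_ne K
    have hex : ∃ A : Finset K, 0 < meas π A ∧ meas π A ≤ 1 / 2 := by
      rcases le_total (π u) (π v) with h | h
      · exact ⟨{u}, hpair u v huv h⟩
      · exact ⟨{v}, hpair v u huv.symm h⟩
    obtain ⟨A, hA1, hA2⟩ := hex
    have hTne : {r : ℝ | ∃ A : Finset K, 0 < meas π A ∧ meas π A ≤ 1 / 2 ∧
        r = psiBig P π A}.Nonempty := ⟨psiBig P π A, A, hA1, hA2, rfl⟩
    have hlow : specGap P π / 4 ≤ psiBigSize P π (1 / 2) := by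
      apply le_csInf hTne
      rintro r ⟨A', h1, h2, rfl⟩
      linarith [main_ineq P π hM A' h1 h2]
    linarith
end
end

section
/- Let P be a lazy, irreducible, aperiodic, reversible Markov chain on a finite state space K with stationary distribution π, and let 0 < ε < 1/2. Then the total variation mixing time satisfies τ(ε) ≥ ((1 − 4·ψ_big(1/2))/(8·ψ_big(1/2)))·log(1/(2ε)). -/
open Finset MeasureTheory
open scoped RealInnerProductSpace

noncomputable section

attribute [local instance] Classical.propDecidable

variable {K : Type*} [Fintype K]

namespace MixAux

variable {P : K → K → ℝ} {π : K → ℝ}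


lemma matPow_zero (P : K → K → ℝ) (u v : K) : matPow P 0 u v = if u = v then 1 else 0 := rfl
lemma matPow_succ (P : K → K → ℝ) (t : ℕ) (u v : K) :
    matPow P (t+1) u v = ∑ w, matPow P t u w * P w v := rfl

lemma matPow_nonneg {P : K → K → ℝ} (hP : ∀ u v, 0 ≤ P u v) :
    ∀ t (u v : K), 0 ≤ matPow P t u v
  | 0, u, v => by rw [matPow_zero]; split <;> norm_num
  | (t+1), u, v => Finset.sum_nonneg fun w _ => mul_nonneg (matPow_nonneg hP t u w) (hP w v)

lemma matPow_rowSum {P : K → K → ℝ} (hP : ∀ u, ∑ v, P u v = 1) :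
    ∀ t (u : K), ∑ v, matPow P t u v = 1
  | 0, u => by simp [matPow_zero]
  | (t+1), u => by
    simp only [matPow_succ]
    rw [Finset.sum_comm]
    simp only [← Finset.mul_sum, hP, mul_one]
    exact matPow_rowSum hP t u

lemma matPow_add (P : K → K → ℝ) (s t : ℕ) (u v : K) :
    matPow P (s + t) u v = ∑ w, matPow P s u w * matPow P t w v := by
  induction t generalizing v with
  | zero => simp [matPow_zero, mul_ite, Finset.sum_ite_eq]
  | succ t ih =>
    rw [show s + (t+1) = (s+t)+1 from rfl, matPow_succ]
    simp only [ih, matPow_succ, Finset.sum_mul, Finset.mul_sum, mul_assoc]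
    exact Finset.sum_comm

lemma matPow_stat {P : K → K → ℝ} {π : K → ℝ} (hs : ∀ v, ∑ u, π u * P u v = π v) :
    ∀ t (v : K), ∑ u, π u * matPow P t u v = π v
  | 0, v => by simp [matPow_zero, mul_ite, Finset.sum_ite_eq']
  | (t+1), v => by
    simp only [matPow_succ, Finset.mul_sum]
    rw [Finset.sum_comm]
    simp only [← mul_assoc, ← Finset.sum_mul, matPow_stat hs t]
    exact hs v

lemma stepDist_add (P : K → K → ℝ) (p : K → ℝ) (s t : ℕ) (v : K) :
    stepDist P p (s + t) v = stepDist P (stepDist P p s) t v := by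
  unfold stepDist
  simp only [matPow_add P s t, Finset.mul_sum, Finset.sum_mul, ← mul_assoc]
  exact Finset.sum_comm

lemma stepDist_isDist {P : K → K → ℝ} {π : K → ℝ} (hM : IsMarkov P π) {p : K → ℝ}
    (hp : IsDist p) (t : ℕ) : IsDist (stepDist P p t) := by
  constructor
  · intro v
    exact Finset.sum_nonneg fun u _ => mul_nonneg (hp.1 u) (matPow_nonneg hM.nonneg t u v)
  · unfold stepDist
    rw [Finset.sum_comm]
    simp only [← Finset.mul_sum, matPow_rowSum hM.rowSum, mul_one]
    exact hp.2

lemma tvDist_le_one {p π : K → ℝ} (hp : IsDist p) (hπ1 : ∀ v, 0 ≤ π v) (hπ2 : ∑ v, π v = 1) :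
    tvDist p π ≤ 1 := by
  unfold tvDist
  have : ∑ v, |p v - π v| ≤ ∑ v, (p v + π v) :=
    Finset.sum_le_sum fun v _ => (abs_sub _ _).trans
      (by rw [abs_of_nonneg (hp.1 v), abs_of_nonneg (hπ1 v)])
  rw [Finset.sum_add_distrib, hp.2, hπ2] at this
  linarith

lemma tv_contract {π p : K → ℝ} {M : K → K → ℝ} {δ : ℝ}
    (hmin : ∀ u v, δ * π v ≤ M u v) (hrow : ∀ u, ∑ v, M u v = 1)
    (hπ : ∑ v, π v = 1) (hstat : ∀ v, ∑ u, π u * M u v = π v)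
    (hp : ∑ v, p v = 1) :
    tvDist (fun v => ∑ u, p u * M u v) π ≤ (1 - δ) * tvDist p π := by
  unfold tvDist
  rw [mul_left_comm]
  have key : ∀ v, |∑ u, p u * M u v - π v| ≤ ∑ u, |p u - π u| * (M u v - δ * π v) := by
    intro v
    have h1 : ∑ u, p u * M u v - π v = ∑ u, (p u - π u) * (M u v - δ * π v) := by
      have e : ∀ u, (p u - π u) * (M u v - δ * π v)
          = p u * M u v - (δ * π v) * p u - π u * M u v + (δ * π v) * π u := by
        intro u; ring
      simp only [e, Finset.sum_add_distrib, Finset.sum_sub_distrib, ← Finset.mul_sum, hp, hπ,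
        hstat v]
      ring
    rw [h1]
    refine (Finset.abs_sum_le_sum_abs _ _).trans (le_of_eq ?_)
    refine Finset.sum_congr rfl fun u _ => ?_
    rw [abs_mul, abs_of_nonneg (show (0:ℝ) ≤ M u v - δ * π v from by linarith [hmin u v])]
  have h2 : ∑ v, |∑ u, p u * M u v - π v| ≤ (1 - δ) * ∑ u, |p u - π u| := by
    calc ∑ v, |∑ u, p u * M u v - π v| ≤ ∑ v, ∑ u, |p u - π u| * (M u v - δ * π v) :=
          Finset.sum_le_sum fun v _ => key v
      _ = ∑ u, |p u - π u| * ((∑ v, M u v) - δ * ∑ v, π v) := by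
          rw [Finset.sum_comm]
          refine Finset.sum_congr rfl fun u _ => ?_
          simp only [mul_sub, Finset.mul_sum, Finset.sum_sub_distrib]
      _ = (1 - δ) * ∑ u, |p u - π u| := by
          simp only [hrow, hπ, mul_one]
          rw [← Finset.sum_mul, mul_comm]
  linarith

lemma nonempty_of_markov {P : K → K → ℝ} {π : K → ℝ} (hM : IsMarkov P π) : Nonempty K := by
  by_contra h
  rw [not_nonempty_iff] at h
  have := hM.piSum
  rw [Finset.univ_eq_empty, Finset.sum_empty] at this
  norm_num at this

lemma matPow_diag_pos {P : K → K → ℝ} {π : K → ℝ} (hM : IsMarkov P π) (hlazy : IsLazy P) :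
    ∀ t (u : K), 0 < matPow P t u u
  | 0, u => by rw [matPow_zero]; simp
  | (t+1), u => by
    rw [matPow_succ]
    have h1 : 0 < matPow P t u u * P u u :=
      mul_pos (matPow_diag_pos hM hlazy t u) (lt_of_lt_of_le (by norm_num) (hlazy u))
    refine lt_of_lt_of_le h1 (Finset.single_le_sum (f := fun w => matPow P t u w * P w u)
      (fun w _ => mul_nonneg (matPow_nonneg hM.nonneg t u w) (hM.nonneg w u))
      (Finset.mem_univ u))

lemma exists_doeblin {P : K → K → ℝ} {π : K → ℝ} (hM : IsMarkov P π) (hlazy : IsLazy P)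
    (hirr : MCIrreducible P) :
    ∃ (t₀ : ℕ) (δ : ℝ), 0 < δ ∧ δ ≤ 1 ∧ ∀ u v, δ * π v ≤ matPow P t₀ u v := by
  have hne : Nonempty K := nonempty_of_markov hM
  choose tf htf using hirr
  set t₀ := Finset.univ.sup (fun q : K × K => tf q.1 q.2) with ht₀
  have hpos : ∀ u v, 0 < matPow P t₀ u v := by
    intro u v
    have hle : tf u v ≤ t₀ := Finset.le_sup (f := fun q : K × K => tf q.1 q.2)
      (Finset.mem_univ (u, v))
    have : matPow P (tf u v + (t₀ - tf u v)) u v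
        = ∑ w, matPow P (tf u v) u w * matPow P (t₀ - tf u v) w v := matPow_add P _ _ u v
    rw [Nat.add_sub_cancel' hle] at this
    rw [this]
    have h1 : 0 < matPow P (tf u v) u v * matPow P (t₀ - tf u v) v v :=
      mul_pos (htf u v) (matPow_diag_pos hM hlazy _ v)
    exact lt_of_lt_of_le h1 (Finset.single_le_sum
      (f := fun w => matPow P (tf u v) u w * matPow P (t₀ - tf u v) w v)
      (fun w _ => mul_nonneg (matPow_nonneg hM.nonneg _ u w) (matPow_nonneg hM.nonneg _ w v))
      (Finset.mem_univ v))
  obtain ⟨q, _, hq⟩ := Finset.exists_min_image Finset.univ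
    (fun q : K × K => matPow P t₀ q.1 q.2 / π q.2) ⟨(Classical.arbitrary K, Classical.arbitrary K), Finset.mem_univ _⟩
  set δ := matPow P t₀ q.1 q.2 / π q.2 with hδ
  have hδpos : 0 < δ := div_pos (hpos q.1 q.2) (hM.piPos q.2)
  have hmin : ∀ u v, δ * π v ≤ matPow P t₀ u v := by
    intro u v
    have := hq (u, v) (Finset.mem_univ _)
    calc δ * π v ≤ (matPow P t₀ u v / π v) * π v := by
          exact mul_le_mul_of_nonneg_right this (le_of_lt (hM.piPos v))
      _ = matPow P t₀ u v := div_mul_cancel₀ _ (ne_of_gt (hM.piPos v))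
  refine ⟨t₀, δ, hδpos, ?_, hmin⟩
  have u0 := Classical.arbitrary K
  have : ∑ v, δ * π v ≤ ∑ v, matPow P t₀ u0 v := Finset.sum_le_sum fun v _ => hmin u0 v
  rw [← Finset.mul_sum, hM.piSum, mul_one, matPow_rowSum hM.rowSum] at this
  exact this

lemma exists_uniform_time {P : K → K → ℝ} {π : K → ℝ} (hM : IsMarkov P π) (hlazy : IsLazy P)
    (hirr : MCIrreducible P) {ε : ℝ} (hε0 : 0 < ε) :
    ∃ T : ℕ, ∀ p : K → ℝ, IsDist p → tvDist (stepDist P p T) π ≤ ε := by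
  obtain ⟨t₀, δ, hδ0, hδ1, hmin⟩ := exists_doeblin hM hlazy hirr
  obtain ⟨k, hk⟩ := exists_pow_lt_of_lt_one hε0 (by linarith : 1 - δ < 1)
  refine ⟨k * t₀, fun p hp => ?_⟩
  have key : ∀ j : ℕ, tvDist (stepDist P p (j * t₀)) π ≤ (1 - δ) ^ j := by
    intro j
    induction j with
    | zero =>
      simp only [Nat.zero_mul, pow_zero]
      have h0 : stepDist P p 0 = p := by
        funext v; unfold stepDist; simp [matPow_zero, mul_ite, Finset.sum_ite_eq']
      rw [h0]
      exact tvDist_le_one hp (fun v => le_of_lt (hM.piPos v)) hM.piSum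
    | succ j ih =>
      have hstep : stepDist P p ((j+1) * t₀) = fun v => ∑ u, stepDist P p (j * t₀) u * matPow P t₀ u v := by
        funext v
        rw [show (j+1) * t₀ = j * t₀ + t₀ by ring, stepDist_add]
        rfl
      rw [hstep]
      have hc := tv_contract (p := stepDist P p (j * t₀)) hmin
        (matPow_rowSum hM.rowSum t₀) hM.piSum (matPow_stat hM.stationary t₀)
        ((stepDist_isDist hM hp (j * t₀)).2)
      refine hc.trans ?_
      calc (1 - δ) * tvDist (stepDist P p (j * t₀)) π ≤ (1 - δ) * (1 - δ) ^ j :=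
            mul_le_mul_of_nonneg_left ih (by linarith)
        _ = (1 - δ) ^ (j + 1) := by ring
  exact (key k).trans (le_of_lt hk)




lemma setProb_nonneg (hM : IsMarkov P π) (v : K) (C : Finset K) : 0 ≤ setProb P v C :=
  Finset.sum_nonneg fun c _ => hM.nonneg v c

lemma setProb_le_one (hM : IsMarkov P π) (v : K) (C : Finset K) : setProb P v C ≤ 1 := by
  rw [← hM.rowSum v]
  exact Finset.sum_le_sum_of_subset_of_nonneg (Finset.subset_univ C)
    (fun c _ _ => hM.nonneg v c)

lemma meas_nonneg (hM : IsMarkov P π) (A : Finset K) : 0 ≤ meas π A :=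
  Finset.sum_nonneg fun v _ => le_of_lt (hM.piPos v)

/-- the canonical fractional subset `(t/π(A))·1_A`. -/
lemma scaledIndicator_isFracSub (hM : IsMarkov P π) {A : Finset K} (hA : 0 < meas π A)
    {t : ℝ} (ht0 : 0 ≤ t) (ht1 : t ≤ meas π A) :
    IsFracSub π A (fun v => (t / meas π A) * (if v ∈ A then 1 else 0)) t := by
  have hr0 : 0 ≤ t / meas π A := div_nonneg ht0 (le_of_lt hA)
  have hr1 : t / meas π A ≤ 1 := (div_le_one hA).2 ht1
  refine ⟨fun v => ?_, fun v hv => by simp [hv], ?_⟩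
  · dsimp only
    split <;> constructor <;> simp [hr0, hr1]
  · simp only [mul_ite, mul_one, mul_zero, ite_mul, zero_mul]
    rw [Finset.sum_ite_mem, Finset.univ_inter, ← Finset.mul_sum]
    exact div_mul_cancel₀ t (ne_of_gt hA)

lemma scaledIndicator_flow (hM : IsMarkov P π) (A C : Finset K) (t : ℝ) :
    fracFlow P π (fun v => (t / meas π A) * (if v ∈ A then 1 else 0)) C
      = (t / meas π A) * ∑ v ∈ A, π v * setProb P v C := by
  have e : ∀ v, (fun v => (t / meas π A) * (if v ∈ A then 1 else 0)) v * π v * setProb P v C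
      = if v ∈ A then (t / meas π A) * (π v * setProb P v C) else 0 := by
    intro v; dsimp only; split <;> ring
  unfold fracFlow
  simp only [e]
  rw [Finset.sum_ite_mem, Finset.univ_inter, Finset.mul_sum]

lemma ergFlow_eq (A C : Finset K) : ergFlow P π A C = ∑ v ∈ A, π v * setProb P v C := by
  unfold ergFlow setProb
  exact Finset.sum_congr rfl fun u _ => (Finset.mul_sum _ _ _).symm

lemma psiSet_nonempty (hM : IsMarkov P π) {A : Finset K} (hA : 0 < meas π A)
    {t : ℝ} (ht0 : 0 ≤ t) (ht1 : t ≤ meas π A) :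
    ((t / meas π A) * ergFlow P π A Aᶜ) ∈
      {q : ℝ | ∃ g : K → ℝ, IsFracSub π A g t ∧ q = fracFlow P π g Aᶜ} := by
  refine ⟨_, scaledIndicator_isFracSub hM hA ht0 ht1, ?_⟩
  rw [scaledIndicator_flow hM, ergFlow_eq]

lemma psiSet_bddAbove (hM : IsMarkov P π) (A : Finset K) (t : ℝ) :
    BddAbove {q : ℝ | ∃ g : K → ℝ, IsFracSub π A g t ∧ q = fracFlow P π g Aᶜ} := by
  refine ⟨1, fun q hq => ?_⟩
  obtain ⟨g, hg, rfl⟩ := hq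
  calc fracFlow P π g Aᶜ ≤ ∑ v, 1 * π v * 1 := by
        refine Finset.sum_le_sum fun v _ => ?_
        have h1 : 0 ≤ g v * π v := mul_nonneg (hg.1 v).1 (le_of_lt (hM.piPos v))
        refine mul_le_mul (by
          have := (hg.1 v).2
          nlinarith [le_of_lt (hM.piPos v)]) (setProb_le_one hM v Aᶜ)
          (setProb_nonneg hM v Aᶜ) (by nlinarith [le_of_lt (hM.piPos v)])
    _ = 1 := by simp [hM.piSum]

lemma psiSup_mono (hM : IsMarkov P π) {A : Finset K} (hA : 0 < meas π A) :
    MonotoneOn (PsiSup P π A) (Set.Icc 0 (meas π A)) := by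
  rintro t ⟨ht0, ht1⟩ t' ⟨ht0', ht1'⟩ htt
  rcases eq_or_lt_of_le htt with rfl | hlt
  · exact le_refl _
  have hmt : t < meas π A := lt_of_lt_of_le hlt ht1'
  set s : ℝ := (t' - t) / (meas π A - t) with hs
  have hs0 : 0 ≤ s := div_nonneg (by linarith) (by linarith)
  have hs1 : s ≤ 1 := (div_le_one (by linarith)).2 (by linarith)
  refine csSup_le ⟨_, psiSet_nonempty hM hA ht0 ht1⟩ ?_
  rintro q ⟨g, hg, rfl⟩
  set g' : K → ℝ := fun v => g v + s * ((if v ∈ A then 1 else 0) - g v) with hg'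
  have hind : ∀ v, g v ≤ (if v ∈ A then (1:ℝ) else 0) := by
    intro v
    split
    · exact (hg.1 v).2
    · next h => rw [hg.2.1 v h]
  have hg'sub : IsFracSub π A g' t' := by
    refine ⟨fun v => ?_, fun v hv => ?_, ?_⟩
    · have h1 := (hg.1 v).1
      have h2 := (hg.1 v).2
      have h3 := hind v
      constructor
      · have : g' v = (1 - s) * g v + s * (if v ∈ A then 1 else 0) := by rw [hg']; ring
        rw [this]
        split <;> nlinarith
      · have : g' v = (1 - s) * g v + s * (if v ∈ A then 1 else 0) := by rw [hg']; ring
        rw [this]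
        split <;> nlinarith
    · simp [hg', hg.2.1 v hv, if_neg hv]
    · have e2 : ∀ v, g' v * π v
          = g v * π v + s * ((if v ∈ A then (1:ℝ) else 0) * π v - g v * π v) :=
        fun v => by simp only [hg']; ring
      have hsum : ∑ v, g' v * π v
          = (∑ v, g v * π v) + s * ((∑ v, (if v ∈ A then (1:ℝ) else 0) * π v) - ∑ v, g v * π v) := by
        calc ∑ v, g' v * π v
            = ∑ v, (g v * π v + s * ((if v ∈ A then (1:ℝ) else 0) * π v - g v * π v)) :=
              Finset.sum_congr rfl fun v _ => e2 v
          _ = _ := by rw [Finset.sum_add_distrib, ← Finset.mul_sum, Finset.sum_sub_distrib]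
      rw [hsum, hg.2.2]
      have hIA : ∑ v, (if v ∈ A then (1:ℝ) else 0) * π v = meas π A := by
        simp only [ite_mul, one_mul, zero_mul]
        rw [Finset.sum_ite_mem, Finset.univ_inter]
        rfl
      rw [hIA, hs, div_mul_cancel₀ _ (by linarith : meas π A - t ≠ 0)]
      ring
  have hle : fracFlow P π g Aᶜ ≤ fracFlow P π g' Aᶜ := by
    refine Finset.sum_le_sum fun v _ => ?_
    have h1 : g v ≤ g' v := by
      have := hind v
      have : 0 ≤ s * ((if v ∈ A then (1:ℝ) else 0) - g v) := mul_nonneg hs0 (by linarith)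
      simp only [hg']
      linarith
    exact mul_le_mul_of_nonneg_right
      (mul_le_mul_of_nonneg_right h1 (le_of_lt (hM.piPos v))) (setProb_nonneg hM v Aᶜ)
  exact hle.trans (le_csSup (psiSet_bddAbove hM A t') ⟨g', hg'sub, rfl⟩)

lemma psiSup_lower (hM : IsMarkov P π) {A : Finset K} (hA : 0 < meas π A)
    {t : ℝ} (ht0 : 0 ≤ t) (ht1 : t ≤ meas π A) :
    (t / meas π A) * ergFlow P π A Aᶜ ≤ PsiSup P π A t :=
  le_csSup (psiSet_bddAbove hM A t) (psiSet_nonempty hM hA ht0 ht1)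

lemma psiBig_ge_half_conductance (hM : IsMarkov P π) {A : Finset K} (hA : 0 < meas π A) :
    ergFlow P π A Aᶜ / (2 * meas π A) ≤ psiBig P π A := by
  set m := meas π A with hm
  set Q := ergFlow P π A Aᶜ with hQ
  have hQ0 : 0 ≤ Q := Finset.sum_nonneg fun u _ => Finset.sum_nonneg fun v _ =>
    mul_nonneg (le_of_lt (hM.piPos u)) (hM.nonneg u v)
  have hint1 : IntervalIntegrable (fun t => (Q / m) * t) volume 0 m := by
    apply Continuous.intervalIntegrable
    continuity
  have hint2 : IntervalIntegrable (PsiSup P π A) volume 0 m := by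
    apply MonotoneOn.intervalIntegrable
    rw [Set.uIcc_of_le (le_of_lt hA)]
    exact psiSup_mono hM hA
  have hmono : ∫ t in (0:ℝ)..m, (Q / m) * t ≤ ∫ t in (0:ℝ)..m, PsiSup P π A t := by
    refine intervalIntegral.integral_mono_on (le_of_lt hA) hint1 hint2 fun t ht => ?_
    have := psiSup_lower hM hA ht.1 ht.2
    calc (Q / m) * t = (t / m) * Q := by ring
      _ ≤ PsiSup P π A t := this
  have hval : ∫ t in (0:ℝ)..m, (Q / m) * t = (Q / m) * (m ^ 2 / 2) := by
    rw [intervalIntegral.integral_const_mul, integral_id]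
    ring_nf
  have h1 : (Q / m) * (m ^ 2 / 2) = Q * m / 2 := by
    field_simp
  have h2 : Q * m / 2 ≤ ∫ t in (0:ℝ)..m, PsiSup P π A t := by
    rw [← h1]; rw [hval] at hmono; exact hmono
  unfold psiBig
  rw [← hm]
  calc Q / (2 * m) = (Q * m / 2) / m ^ 2 := by
        field_simp
    _ ≤ (∫ t in (0:ℝ)..m, PsiSup P π A t) / m ^ 2 := by gcongr




lemma exists_top_eigen (hM : IsMarkov P π) (hrev : IsReversible P π)
    (hcard : ∃ u v : K, u ≠ v) :
    ∃ (β : ℝ) (f : K → ℝ), f ≠ 0 ∧ (∑ v, π v * f v = 0) ∧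
      (∀ u, ∑ v, P u v * f v = β * f u) ∧
      (∀ h : K → ℝ, (∑ v, π v * h v = 0) →
        ∑ u, ∑ v, π u * P u v * h u * h v ≤ β * ∑ v, π v * h v ^ 2) := by
  classical
  have sqpos : ∀ v, 0 < Real.sqrt (π v) := fun v => Real.sqrt_pos.2 (hM.piPos v)
  have sqsq : ∀ v, Real.sqrt (π v) * Real.sqrt (π v) = π v :=
    fun v => Real.mul_self_sqrt (le_of_lt (hM.piPos v))
  set S : Matrix K K ℝ := Matrix.of (fun u v => Real.sqrt (π u) * P u v / Real.sqrt (π v))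
    with hS
  have hSsymm : ∀ u v, S u v = S v u := by
    intro u v
    have h := hrev u v
    simp only [hS, Matrix.of_apply]
    rw [div_eq_div_iff (ne_of_gt (sqpos v)) (ne_of_gt (sqpos u))]
    linear_combination P u v * sqsq u - P v u * sqsq v + h
  have hHerm : S.IsHermitian := by
    ext u v
    simp only [Matrix.conjTranspose_apply, star_trivial]
    exact hSsymm v u
  set T₀ := Matrix.toEuclideanLin S with hT₀
  have hsym : T₀.IsSymmetric := Matrix.isHermitian_iff_isSymmetric.1 hHerm
  set w : EuclideanSpace ℝ K := (WithLp.equiv 2 (K → ℝ)).symm (fun v => Real.sqrt (π v))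
    with hw
  have hwapp : ∀ v, w v = Real.sqrt (π v) := fun v => rfl
  have hmulvec : ∀ (g : EuclideanSpace ℝ K) (u : K), T₀ g u = ∑ v, S u v * g v := by
    intro g u
    rw [Matrix.toEuclideanLin_apply]
    rfl
  have hT₀w : T₀ w = w := by
    ext u
    rw [hmulvec]
    rw [hwapp]
    calc ∑ v, S u v * w v = ∑ v, Real.sqrt (π u) * P u v := by
          refine Finset.sum_congr rfl fun v _ => ?_
          rw [hwapp v]
          simp only [hS, Matrix.of_apply]
          rw [div_mul_cancel₀ _ (ne_of_gt (sqpos v))]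
      _ = Real.sqrt (π u) := by rw [← Finset.mul_sum, hM.rowSum, mul_one]
  set V : Submodule ℝ (EuclideanSpace ℝ K) := (ℝ ∙ w)ᗮ with hV
  have hinv : ∀ x ∈ V, T₀ x ∈ V := by
    intro x hx
    rw [hV, Submodule.mem_orthogonal_singleton_iff_inner_right] at hx ⊢
    have h1 : ⟪w, T₀ x⟫ = ⟪T₀ w, x⟫ := (hsym w x).symm
    have h2 : ⟪T₀ w, x⟫ = ⟪w, x⟫ := congrArg (fun z => ⟪z, x⟫) hT₀w
    rw [h1, h2, hx]
  have innerform : ∀ x y : EuclideanSpace ℝ K, ⟪x, y⟫ = ∑ v, x v * y v := by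
    intro x y
    simp [PiLp.inner_apply, RCLike.inner_apply, conj_trivial]
    exact Finset.sum_congr rfl fun v _ => mul_comm _ _
  set T := T₀.restrict hinv with hT
  have hTsym : T.IsSymmetric := hsym.restrict_invariant hinv
  obtain ⟨a, c, hac⟩ := hcard
  haveI : Nontrivial K := ⟨⟨a, c, hac⟩⟩
  have hwne : w ≠ 0 := by
    intro h0
    have : w a = 0 := by rw [h0]; rfl
    rw [hwapp a] at this
    exact (ne_of_gt (sqpos a)) this
  have hfr : Module.finrank ℝ (EuclideanSpace ℝ K) = Fintype.card K := finrank_euclideanSpace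
  have hspan : Module.finrank ℝ (ℝ ∙ w) = 1 := finrank_span_singleton hwne
  have hVrank : 1 + Module.finrank ℝ V = Fintype.card K := by
    have h := Submodule.finrank_add_finrank_orthogonal (K := (ℝ ∙ w))
    rw [hspan, hfr] at h
    exact h
  have hnpos : 0 < Module.finrank ℝ V := by
    have h2 : 2 ≤ Fintype.card K := Fintype.one_lt_card
    omega
  set n := Module.finrank ℝ V with hn
  have hrank : Module.finrank ℝ V = n := rfl
  haveI : Nonempty (Fin n) := ⟨⟨0, hnpos⟩⟩
  set μ := hTsym.eigenvalues hrank with hμ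
  set b := hTsym.eigenvectorBasis hrank with hb
  obtain ⟨i₀, _, hi₀⟩ := Finset.exists_max_image Finset.univ μ
    ⟨Classical.arbitrary (Fin n), Finset.mem_univ _⟩
  set β := μ i₀ with hβ
  set x₀ := b i₀ with hx₀
  have happly : ∀ i, T (b i) = μ i • b i := by
    intro i
    have h1 := hTsym.apply_eigenvectorBasis hrank i
    exact_mod_cast h1
  have hquad : ∀ x : V, ⟪x, T x⟫ ≤ β * ⟪x, x⟫ := by
    intro x
    have e0 : ∀ i, ⟪b i, T x⟫ = μ i * ⟪b i, x⟫ := by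
      intro i
      rw [← hTsym (b i) x, happly i, real_inner_smul_left]
    have e1 : ⟪x, T x⟫ = ∑ i, μ i * (⟪x, b i⟫ * ⟪b i, x⟫) := by
      rw [← OrthonormalBasis.sum_inner_mul_inner b x (T x)]
      refine Finset.sum_congr rfl fun i _ => ?_
      rw [e0 i]
      ring
    have e2 : ⟪x, x⟫ = ∑ i, ⟪x, b i⟫ * ⟪b i, x⟫ :=
      (OrthonormalBasis.sum_inner_mul_inner b x x).symm
    rw [e1, e2, Finset.mul_sum]
    refine Finset.sum_le_sum fun i _ => ?_
    have hpos : 0 ≤ ⟪x, b i⟫ * ⟪b i, x⟫ := by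
      rw [real_inner_comm (b i) x]
      exact mul_self_nonneg _
    exact mul_le_mul_of_nonneg_right (hi₀ i (Finset.mem_univ i)) hpos
  set g₀ : EuclideanSpace ℝ K := (x₀ : EuclideanSpace ℝ K) with hg₀
  have hg₀V : g₀ ∈ V := x₀.2
  have hTg₀ : T₀ g₀ = β • g₀ := by
    have h1 : (↑(T x₀) : EuclideanSpace ℝ K) = T₀ g₀ := LinearMap.restrict_coe_apply T₀ hinv x₀
    have h2 : T x₀ = β • x₀ := happly i₀
    rw [← h1, h2]
    rfl
  have hg₀ne : g₀ ≠ 0 := by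
    intro h0
    have : x₀ = 0 := Subtype.ext h0
    exact (b.orthonormal.ne_zero i₀) this
  set f : K → ℝ := fun v => g₀ v / Real.sqrt (π v) with hf
  refine ⟨β, f, ?_, ?_, ?_, ?_⟩
  · intro h0
    apply hg₀ne
    ext v
    have : f v = 0 := by rw [h0]; rfl
    rw [hf] at this
    simpa using (div_eq_zero_iff.1 this).resolve_right (ne_of_gt (sqpos v))
  · have hin : ⟪w, g₀⟫ = 0 := by
      have := hg₀V
      rw [hV, Submodule.mem_orthogonal_singleton_iff_inner_right] at this
      exact this
    rw [innerform] at hin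
    rw [← hin]
    refine Finset.sum_congr rfl fun v _ => ?_
    rw [hwapp v, hf]
    show π v * (g₀ v / Real.sqrt (π v)) = Real.sqrt (π v) * g₀ v
    rw [mul_div_assoc', mul_comm (π v) (g₀ v), mul_div_assoc, Real.div_sqrt]
    ring
  · intro u
    have h5 : ∑ v, S u v * g₀ v = β * g₀ u := by
      rw [← hmulvec, hTg₀]
      rfl
    have h6 : ∀ v, P u v * f v = (1 / Real.sqrt (π u)) * (S u v * g₀ v) := by
      intro v
      simp only [hf, hS, Matrix.of_apply]
      field_simp
      rw [div_eq_div_iff (ne_of_gt (sqpos v)) (ne_of_gt (mul_pos (sqpos v) (sqpos u)))]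
      ring
    calc ∑ v, P u v * f v = (1 / Real.sqrt (π u)) * ∑ v, S u v * g₀ v := by
          rw [Finset.mul_sum]
          exact Finset.sum_congr rfl fun v _ => h6 v
      _ = β * f u := by
          rw [h5, hf]
          show (1 / Real.sqrt (π u)) * (β * g₀ u) = β * (g₀ u / Real.sqrt (π u))
          ring
  · intro h hmean
    set gf : EuclideanSpace ℝ K := (WithLp.equiv 2 (K → ℝ)).symm (fun v => Real.sqrt (π v) * h v)
      with hgf
    have hgfapp : ∀ v, gf v = Real.sqrt (π v) * h v := fun v => rfl
    have hmem : gf ∈ V := by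
      rw [hV, Submodule.mem_orthogonal_singleton_iff_inner_right, innerform]
      rw [← hmean]
      refine Finset.sum_congr rfl fun v _ => ?_
      rw [hwapp v, hgfapp v]
      linear_combination h v * sqsq v
    set x : V := ⟨gf, hmem⟩ with hx
    have hTx : (↑(T x) : EuclideanSpace ℝ K) = T₀ gf := LinearMap.restrict_coe_apply T₀ hinv x
    have hleft : ⟪x, T x⟫ = ∑ u, ∑ v, π u * P u v * h u * h v := by
      have hinner2 : ⟪x, T x⟫ = ⟪gf, T₀ gf⟫ := by
        rw [Submodule.coe_inner, hTx]
      rw [hinner2, innerform]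
      refine Finset.sum_congr rfl fun u _ => ?_
      rw [hmulvec, Finset.mul_sum]
      refine Finset.sum_congr rfl fun v _ => ?_
      rw [hgfapp u, hgfapp v]
      simp only [hS, Matrix.of_apply]
      calc Real.sqrt (π u) * h u * (Real.sqrt (π u) * P u v / Real.sqrt (π v) * (Real.sqrt (π v) * h v))
          = (Real.sqrt (π u) * Real.sqrt (π u)) * P u v * h u * h v
              * (Real.sqrt (π v) / Real.sqrt (π v)) := by ring
        _ = π u * P u v * h u * h v := by
            rw [sqsq u, div_self (ne_of_gt (sqpos v))]
            ring
    have hright : ⟪x, x⟫ = ∑ v, π v * h v ^ 2 := by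
      have hx2 : ⟪x, x⟫ = ⟪gf, gf⟫ := Submodule.coe_inner _ x x
      rw [hx2, innerform]
      refine Finset.sum_congr rfl fun v _ => ?_
      rw [hgfapp v]
      linear_combination h v * h v * sqsq v
    have hq := hquad x
    rw [hleft, hright] at hq
    exact hq




lemma ergFlow_pos (hM : IsMarkov P π) (hirr : MCIrreducible P) {A : Finset K}
    (hA : A.Nonempty) (hAc : Aᶜ.Nonempty) : 0 < ergFlow P π A Aᶜ := by
  by_contra hQ
  push_neg at hQ
  have hnn : ∀ u ∈ A, ∀ v ∈ Aᶜ, 0 ≤ π u * P u v :=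
    fun u _ v _ => mul_nonneg (le_of_lt (hM.piPos u)) (hM.nonneg u v)
  have hQ0 : ergFlow P π A Aᶜ = 0 :=
    le_antisymm hQ (Finset.sum_nonneg fun u hu => Finset.sum_nonneg fun v hv => hnn u hu v hv)
  have hzero : ∀ u ∈ A, ∀ v ∈ Aᶜ, P u v = 0 := by
    intro u hu v hv
    have h1 := (Finset.sum_eq_zero_iff_of_nonneg
      (fun u hu => Finset.sum_nonneg fun v hv => hnn u hu v hv)).1 hQ0 u hu
    have h2 := (Finset.sum_eq_zero_iff_of_nonneg (fun v hv => hnn u hu v hv)).1 h1 v hv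
    rcases mul_eq_zero.1 h2 with h | h
    · exact absurd h (ne_of_gt (hM.piPos u))
    · exact h
  have hmat : ∀ t, ∀ u ∈ A, ∀ v ∉ A, matPow P t u v = 0 := by
    intro t
    induction t with
    | zero =>
      intro u hu v hv
      rw [matPow_zero, if_neg]
      intro h; exact hv (h ▸ hu)
    | succ t ih =>
      intro u hu v hv
      rw [matPow_succ]
      refine Finset.sum_eq_zero fun w _ => ?_
      by_cases hw : w ∈ A
      · rw [hzero w hw v (Finset.mem_compl.2 hv), mul_zero]
      · rw [ih u hu w hw, zero_mul]
  obtain ⟨u, hu⟩ := hA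
  obtain ⟨v, hv⟩ := hAc
  obtain ⟨t, ht⟩ := hirr u v
  rw [hmat t u hu v (Finset.mem_compl.1 hv)] at ht
  exact lt_irrefl 0 ht

lemma matPow_eigen {β : ℝ} {f : K → ℝ} (heig : ∀ u, ∑ v, P u v * f v = β * f u) :
    ∀ t (u : K), ∑ v, matPow P t u v * f v = β ^ t * f u
  | 0, u => by simp [matPow_zero, ite_mul, Finset.sum_ite_eq]
  | (t+1), u => by
    simp only [matPow_succ, Finset.sum_mul]
    rw [Finset.sum_comm]
    have e1 : ∀ w, ∑ v, matPow P t u w * P w v * f v = matPow P t u w * (β * f w) := by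
      intro w
      rw [← heig w, Finset.mul_sum]
      exact Finset.sum_congr rfl fun v _ => by ring
    rw [Finset.sum_congr rfl fun w _ => e1 w]
    have e2 : ∑ w, matPow P t u w * (β * f w) = β * ∑ w, matPow P t u w * f w := by
      rw [Finset.mul_sum]
      exact Finset.sum_congr rfl fun w _ => by ring
    rw [e2, matPow_eigen heig t u]
    ring

lemma pointmass_isDist (x : K) : IsDist (fun u => if u = x then (1:ℝ) else 0) := by
  constructor
  · intro v; dsimp only; split <;> norm_num
  · simp [Finset.sum_ite_eq']

lemma stepDist_pointmass (P : K → K → ℝ) (x : K) (t : ℕ) (v : K) :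
    stepDist P (fun u => if u = x then (1:ℝ) else 0) t v = matPow P t x v := by
  unfold stepDist
  simp [ite_mul, Finset.sum_ite_eq']

lemma eigen_tv (hM : IsMarkov P π) {β : ℝ} {f : K → ℝ} (hf0 : f ≠ 0)
    (hmean : ∑ v, π v * f v = 0) (heig : ∀ u, ∑ v, P u v * f v = β * f u) :
    ∃ x : K, ∀ t : ℕ,
      |β| ^ t ≤ 2 * tvDist (stepDist P (fun u => if u = x then (1:ℝ) else 0) t) π := by
  have hne : Nonempty K := by
    by_contra h
    rw [not_nonempty_iff] at h
    have := hM.piSum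
    rw [Finset.univ_eq_empty, Finset.sum_empty] at this
    norm_num at this
  obtain ⟨x, _, hx⟩ := Finset.exists_max_image Finset.univ (fun v => |f v|)
    ⟨Classical.arbitrary K, Finset.mem_univ _⟩
  have hMx : 0 < |f x| := by
    rcases Function.ne_iff.1 hf0 with ⟨v, hv⟩
    have : 0 < |f v| := abs_pos.2 hv
    exact lt_of_lt_of_le this (hx v (Finset.mem_univ v))
  refine ⟨x, fun t => ?_⟩
  have hmat : ∑ v, matPow P t x v * f v = β ^ t * f x := matPow_eigen heig t x
  have key : β ^ t * f x = ∑ v, (matPow P t x v - π v) * f v := by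
    have : ∑ v, (matPow P t x v - π v) * f v
        = (∑ v, matPow P t x v * f v) - ∑ v, π v * f v := by
      rw [← Finset.sum_sub_distrib]
      exact Finset.sum_congr rfl fun v _ => by ring
    rw [this, hmean, hmat, sub_zero]
  have h2 : |β| ^ t * |f x| ≤ (∑ v, |matPow P t x v - π v|) * |f x| := by
    rw [← abs_pow, ← abs_mul, key]
    calc |∑ v, (matPow P t x v - π v) * f v| ≤ ∑ v, |(matPow P t x v - π v) * f v| :=
          Finset.abs_sum_le_sum_abs _ _
      _ ≤ ∑ v, |matPow P t x v - π v| * |f x| := by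
          refine Finset.sum_le_sum fun v _ => ?_
          rw [abs_mul]
          exact mul_le_mul_of_nonneg_left (hx v (Finset.mem_univ v)) (abs_nonneg _)
      _ = (∑ v, |matPow P t x v - π v|) * |f x| := by rw [Finset.sum_mul]
  have h3 : |β| ^ t ≤ ∑ v, |matPow P t x v - π v| :=
    le_of_mul_le_mul_right h2 hMx
  have h4 : 2 * tvDist (stepDist P (fun u => if u = x then (1:ℝ) else 0) t) π
      = ∑ v, |matPow P t x v - π v| := by
    unfold tvDist
    rw [← mul_assoc]
    norm_num
    exact Finset.sum_congr rfl fun v _ => by rw [stepDist_pointmass]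
  rw [h4]
  exact h3


lemma indicator_quad (hM : IsMarkov P π) {β : ℝ}
    (hquad : ∀ h : K → ℝ, (∑ v, π v * h v = 0) →
        ∑ u, ∑ v, π u * P u v * h u * h v ≤ β * ∑ v, π v * h v ^ 2)
    (A : Finset K) :
    (1 - β) * (meas π A - (meas π A)^2) ≤ ergFlow P π A Aᶜ := by
  set a := meas π A with ha
  set ind : K → ℝ := fun v => if v ∈ A then 1 else 0 with hind
  have hsum_ind : ∑ v, π v * ind v = a := by
    simp only [hind, mul_ite, mul_one, mul_zero]
    rw [Finset.sum_ite_mem, Finset.univ_inter]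
    rfl
  have hmean : ∑ v, π v * (ind v - a) = 0 := by
    have e : ∑ v, π v * (ind v - a) = (∑ v, π v * ind v) - a * ∑ v, π v := by
      rw [Finset.mul_sum, ← Finset.sum_sub_distrib]
      exact Finset.sum_congr rfl fun v _ => by ring
    rw [e, hsum_ind, hM.piSum]
    ring
  have hq := hquad (fun v => ind v - a) hmean
  have hsp : ∀ u, ∑ v, P u v * ind v = setProb P u A := by
    intro u
    simp only [hind, mul_ite, mul_one, mul_zero]
    rw [Finset.sum_ite_mem, Finset.univ_inter]
    rfl
  have hrowsplit : ∀ u, setProb P u A + setProb P u Aᶜ = 1 := by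
    intro u
    unfold setProb
    rw [Finset.sum_add_sum_compl]
    exact hM.rowSum u
  have hstatA : ∑ u, π u * setProb P u A = a := by
    unfold setProb
    calc ∑ u, π u * ∑ v ∈ A, P u v = ∑ u, ∑ v ∈ A, π u * P u v :=
          Finset.sum_congr rfl fun u _ => Finset.mul_sum _ _ _
      _ = ∑ v ∈ A, ∑ u, π u * P u v := Finset.sum_comm
      _ = ∑ v ∈ A, π v := Finset.sum_congr rfl fun v _ => hM.stationary v
      _ = a := rfl
  have hterm1 : ∑ u, π u * ind u * setProb P u A = ergFlow P π A A := by
    rw [ergFlow_eq]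
    simp only [hind, mul_ite, mul_one, mul_zero, ite_mul, zero_mul]
    rw [Finset.sum_ite_mem, Finset.univ_inter]
  have hLHS : ∑ u, ∑ v, π u * P u v * (ind u - a) * (ind v - a)
      = ergFlow P π A A - a^2 := by
    have hin : ∀ u, ∑ v, π u * P u v * (ind u - a) * (ind v - a)
        = π u * (ind u - a) * (setProb P u A - a) := by
      intro u
      calc ∑ v, π u * P u v * (ind u - a) * (ind v - a)
          = ∑ v, (π u * (ind u - a)) * (P u v * ind v - a * P u v) :=
            Finset.sum_congr rfl fun v _ => by ring
        _ = (π u * (ind u - a)) * ((∑ v, P u v * ind v) - a * ∑ v, P u v) := by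
            rw [← Finset.mul_sum, Finset.sum_sub_distrib, ← Finset.mul_sum]
        _ = π u * (ind u - a) * (setProb P u A - a) := by
            rw [hsp u, hM.rowSum u, mul_one]
    calc ∑ u, ∑ v, π u * P u v * (ind u - a) * (ind v - a)
        = ∑ u, (π u * ind u * setProb P u A - a * (π u * ind u)
            - a * (π u * setProb P u A) + a^2 * π u) := by
          refine Finset.sum_congr rfl fun u _ => ?_
          rw [hin u]
          ring
      _ = (∑ u, π u * ind u * setProb P u A) - a * (∑ u, π u * ind u)
            - a * (∑ u, π u * setProb P u A) + a^2 * ∑ u, π u := by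
          rw [Finset.sum_add_distrib, Finset.sum_sub_distrib, Finset.sum_sub_distrib,
            ← Finset.mul_sum, ← Finset.mul_sum, ← Finset.mul_sum]
      _ = ergFlow P π A A - a^2 := by
          have hsum_ind' : ∑ u, π u * ind u = a := hsum_ind
          rw [hterm1, hsum_ind', hstatA, hM.piSum]
          ring
  have hRHS : ∑ v, π v * (ind v - a)^2 = a - a^2 := by
    have hii : ∀ v, π v * (ind v - a)^2
        = π v * ind v - 2*a*(π v * ind v) + a^2 * π v := by
      intro v
      have : ind v * ind v = ind v := by
        simp only [hind]
        split <;> ring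
      linear_combination π v * this
    calc ∑ v, π v * (ind v - a)^2
        = ∑ v, (π v * ind v - 2*a*(π v * ind v) + a^2 * π v) :=
          Finset.sum_congr rfl fun v _ => hii v
      _ = (∑ v, π v * ind v) - 2*a*(∑ v, π v * ind v) + a^2 * ∑ v, π v := by
          rw [Finset.sum_add_distrib, Finset.sum_sub_distrib, ← Finset.mul_sum, ← Finset.mul_sum]
      _ = a - a^2 := by
          rw [hsum_ind, hM.piSum]
          ring
  have hpart : ergFlow P π A A + ergFlow P π A Aᶜ = a := by
    rw [ergFlow_eq, ergFlow_eq, ← Finset.sum_add_distrib]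
    calc ∑ u ∈ A, (π u * setProb P u A + π u * setProb P u Aᶜ)
        = ∑ u ∈ A, π u := Finset.sum_congr rfl fun u _ => by
          rw [← mul_add, hrowsplit u, mul_one]
      _ = a := rfl
  rw [hLHS, hRHS] at hq
  nlinarith [hq, hpart]

end MixAux

/-- lower bound on the total variation mixing time via `ψ_big(1/2)`. -/
theorem mixing_time_lower_bound_psiBig
    (P : K → K → ℝ) (π : K → ℝ)
    (hM : IsMarkov P π) (hlazy : IsLazy P)
    (hirr : MCIrreducible P) (hap : MCAperiodic P)
    (hrev : IsReversible P π)
    (ε : ℝ) (hε0 : 0 < ε) (hε : ε < 1 / 2) :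
    (mixTV P π ε : ℝ) ≥
      ((1 - 4 * psiBigSize P π (1 / 2)) / (8 * psiBigSize P π (1 / 2))) *
        Real.log (1 / (2 * ε)) := by
  classical
  have hε2 : 2 * ε < 1 := by linarith
  have hlog : 0 < Real.log (1 / (2 * ε)) := by
    apply Real.log_pos
    rw [lt_div_iff₀ (by positivity)]
    linarith
  set ψ := psiBigSize P π (1 / 2) with hψdef
  by_cases hne : {r : ℝ | ∃ A : Finset K, 0 < meas π A ∧ meas π A ≤ 1/2 ∧
      r = psiBig P π A}.Nonempty
  case neg =>
    have hψ0 : ψ = 0 := by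
      rw [hψdef]
      unfold psiBigSize
      rw [Set.not_nonempty_iff_eq_empty.1 hne]
      exact Real.sInf_empty
    rw [ge_iff_le, hψ0]
    norm_num
  case pos =>
  have hfin : Set.Finite {r : ℝ | ∃ A : Finset K, 0 < meas π A ∧ meas π A ≤ 1/2 ∧
      r = psiBig P π A} := by
    apply Set.Finite.subset (Set.finite_range (psiBig P π))
    rintro r ⟨A, -, -, rfl⟩
    exact ⟨A, rfl⟩
  obtain ⟨A₀, hA₀pos, hA₀half, hA₀eq⟩ := hne.csInf_mem hfin
  have hψA : ψ = psiBig P π A₀ := hA₀eq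
  have hA₀ne : A₀.Nonempty := by
    rw [Finset.nonempty_iff_ne_empty]
    intro h
    rw [h] at hA₀pos
    simp [meas] at hA₀pos
  have hA₀cne : A₀ᶜ.Nonempty := by
    rw [Finset.nonempty_iff_ne_empty]
    intro h
    have huniv : A₀ = Finset.univ := by
      rwa [Finset.compl_eq_empty_iff] at h
    rw [huniv] at hA₀half
    unfold meas at hA₀half
    rw [hM.piSum] at hA₀half
    linarith
  have hQpos : 0 < ergFlow P π A₀ A₀ᶜ := MixAux.ergFlow_pos hM hirr hA₀ne hA₀cne
  have hψpos : 0 < ψ := by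
    rw [hψA]
    exact lt_of_lt_of_le (div_pos hQpos (by linarith))
      (MixAux.psiBig_ge_half_conductance hM hA₀pos)
  obtain ⟨u₀, hu₀⟩ := hA₀ne
  obtain ⟨v₀, hv₀⟩ := hA₀cne
  have hcard : ∃ u v : K, u ≠ v :=
    ⟨u₀, v₀, fun h => (Finset.mem_compl.1 hv₀) (h ▸ hu₀)⟩
  obtain ⟨β, f, hfne, hfmean, hfeig, hquad⟩ := MixAux.exists_top_eigen hM hrev hcard
  have hf1 := MixAux.indicator_quad hM hquad A₀
  have hQψ : ergFlow P π A₀ A₀ᶜ ≤ 2 * meas π A₀ * ψ := by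
    have h := MixAux.psiBig_ge_half_conductance hM hA₀pos
    rw [← hψA] at h
    rw [div_le_iff₀ (by linarith)] at h
    linarith
  have hβlow : 1 - β ≤ 4 * ψ := by
    by_cases hβ1 : 1 ≤ β
    · nlinarith [hψpos]
    · push_neg at hβ1
      nlinarith [hf1, hQψ, hA₀pos, hA₀half, hψpos,
        mul_nonneg (mul_nonneg (by linarith : (0:ℝ) ≤ 1 - β) (le_of_lt hA₀pos))
          (by linarith : (0:ℝ) ≤ 1/2 - meas π A₀)]
  rcases le_or_gt (1 - 4*ψ) 0 with hcase | hcase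
  · have hcoef : (1 - 4*ψ)/(8*ψ) ≤ 0 :=
      div_nonpos_of_nonpos_of_nonneg hcase (by linarith)
    have hle0 : (1 - 4*ψ)/(8*ψ) * Real.log (1/(2*ε)) ≤ 0 := by
      have := mul_le_mul_of_nonneg_right hcoef (le_of_lt hlog)
      rwa [zero_mul] at this
    exact le_trans hle0 (Nat.cast_nonneg _)
  · have hβge : 1 - 4*ψ ≤ β := by linarith
    obtain ⟨x, hxtv⟩ := MixAux.eigen_tv hM hfne hfmean hfeig
    obtain ⟨T, hT⟩ := MixAux.exists_uniform_time hM hlazy hirr hε0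
    set px : K → ℝ := fun u => if u = x then (1:ℝ) else 0 with hpx
    have hTin : T ∈ {t : ℕ | tvDist (stepDist P px t) π ≤ ε} :=
      hT px (MixAux.pointmass_isDist x)
    set n := sInf {t : ℕ | tvDist (stepDist P px t) π ≤ ε} with hn
    have hnin : n ∈ {t : ℕ | tvDist (stepDist P px t) π ≤ ε} :=
      Nat.sInf_mem ⟨T, hTin⟩
    have hmix : (n : ℝ) ≤ (mixTV P π ε : ℝ) := by
      have hmem : n ∈ {m : ℕ | ∃ p : K → ℝ, IsDist p ∧
          m = sInf {t : ℕ | tvDist (stepDist P p t) π ≤ ε}} :=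
        ⟨px, MixAux.pointmass_isDist x, rfl⟩
      have hbdd : BddAbove {m : ℕ | ∃ p : K → ℝ, IsDist p ∧
          m = sInf {t : ℕ | tvDist (stepDist P p t) π ≤ ε}} := by
        refine ⟨T, fun m hm => ?_⟩
        obtain ⟨p, hp, rfl⟩ := hm
        exact Nat.sInf_le (hT p hp)
      exact Nat.cast_le.2 (le_csSup hbdd hmem)
    set b := |β| with hb
    have hble : 1 - 4*ψ ≤ b := le_trans hβge (le_abs_self β)
    have hb0 : 0 < b := lt_of_lt_of_le hcase hble
    have hbn : b ^ n ≤ 2*ε := by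
      calc b^n ≤ 2 * tvDist (stepDist P px n) π := hxtv n
        _ ≤ 2*ε := by
            have := hnin
            simp only [Set.mem_setOf_eq] at this
            linarith
    have hb1 : b < 1 := by
      by_contra hb1
      push_neg at hb1
      have h1n : (1:ℝ) ≤ b^n := one_le_pow₀ hb1
      linarith
    have hstep : Real.log (1/(2*ε)) ≤ (n : ℝ) * (-Real.log b) := by
      have h5 : Real.log (b^n) ≤ Real.log (2*ε) :=
        Real.log_le_log (by positivity) hbn
      rw [Real.log_pow] at h5
      rw [one_div, Real.log_inv]
      push_cast at h5 ⊢
      linarith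
    have hd : -Real.log b ≤ 4*ψ/(1-4*ψ) := by
      have h6 : Real.log (1-4*ψ) ≤ Real.log b := Real.log_le_log hcase hble
      have h7 : Real.log ((1-4*ψ)⁻¹) ≤ (1-4*ψ)⁻¹ - 1 :=
        Real.log_le_sub_one_of_pos (by positivity)
      rw [Real.log_inv] at h7
      have h8 : (1-4*ψ)⁻¹ - 1 = 4*ψ/(1-4*ψ) := by
        field_simp
        ring
      linarith
    have h9 : Real.log (1/(2*ε)) ≤ (n:ℝ) * (4*ψ/(1-4*ψ)) :=
      hstep.trans (mul_le_mul_of_nonneg_left hd (Nat.cast_nonneg n))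
    rw [← mul_div_assoc, le_div_iff₀ hcase] at h9
    rw [ge_iff_le]
    have h10 : (1-4*ψ)/(8*ψ) * Real.log (1/(2*ε)) ≤ (n:ℝ) := by
      rw [div_mul_eq_mul_div, div_le_iff₀ (by positivity)]
      nlinarith [h9, Nat.cast_nonneg (α := ℝ) n, hψpos, hlog]
    exact h10.trans hmix
end
end
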